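/- arXiv:2105.13834 — 5 statements merged into one kernel-verified Lean document; each statement's English description precedes it below -/
import Mathlib

section
/- Dobiński's formula: for every positive integer n, the Bell number B_n equals e^{-1} \sum_{k=0}^{\infty} k^n / k!, where the series converges and the equality is between real numbers. -/
set_option maxHeartbeats 1000000

open Finset

namespace DobAux

variable {α : Type*}

open Finset



variable {α β : Type*}

/-- Transport a finpartition of `univ` along an equivalence of the ground types. -/
def mapPart [DecidableEq α] [DecidableEq β] [Fintype α] [Fintype β] (e : α ≃ β)
    (P : Finpartition (univ : Finset α)) : Finpartition (univ : Finset β) where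
  parts := P.parts.image (fun u => u.map e.toEmbedding)
  supIndep := by
    rw [Finset.supIndep_iff_pairwiseDisjoint]
    rintro x hx y hy hxy
    simp only [coe_image, Set.mem_image, mem_coe] at hx hy
    obtain ⟨u, hu, rfl⟩ := hx
    obtain ⟨v, hv, rfl⟩ := hy
    have huv : u ≠ v := fun h => hxy (by rw [h])
    have := P.disjoint hu hv huv
    simp only [Function.onFun, id] at this ⊢
    exact (Finset.disjoint_map _).mpr this
  sup_parts := by
    rw [Finset.eq_univ_iff_forall]
    intro b
    rw [Finset.mem_sup]
    refine ⟨(P.part (e.symm b)).map e.toEmbedding, mem_image_of_mem _ (P.part_mem.2 (mem_univ _)), ?_⟩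
    simp only [id, Finset.mem_map, Equiv.coe_toEmbedding]
    exact ⟨e.symm b, P.mem_part (mem_univ _), by simp⟩
  bot_notMem := by
    intro h
    simp only [bot_eq_empty, mem_image, Finset.map_eq_empty] at h
    obtain ⟨u, hu, rfl⟩ := h
    exact P.bot_notMem hu

lemma mapPart_mapPart [DecidableEq α] [DecidableEq β] [Fintype α] [Fintype β] (e : α ≃ β)
    (P : Finpartition (univ : Finset α)) : mapPart e.symm (mapPart e P) = P := by
  apply Finpartition.ext
  simp only [mapPart, Finset.image_image]
  rw [show ((fun u => Finset.map e.symm.toEmbedding u) ∘ fun u => Finset.map e.toEmbedding u)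
      = id by funext u; simp [Finset.map_map]]
  simp

/-- Equivalence of finpartitions of `univ` induced by an equivalence of ground types. -/
def equivCongr [DecidableEq α] [DecidableEq β] [Fintype α] [Fintype β] (e : α ≃ β) :
    Finpartition (univ : Finset α) ≃ Finpartition (univ : Finset β) where
  toFun := mapPart e
  invFun := mapPart e.symm
  left_inv P := mapPart_mapPart e P
  right_inv P := by simpa using mapPart_mapPart e.symm P

/-- A finpartition of a finset `s` gives a finpartition of `univ` on the subtype. -/
def toAttach [DecidableEq α] {s : Finset α} (P : Finpartition s) :
    Finpartition (univ : Finset {x // x ∈ s}) where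
  parts := P.parts.image (fun u => u.subtype (· ∈ s))
  supIndep := by
    rw [Finset.supIndep_iff_pairwiseDisjoint]
    rintro x hx y hy hxy
    simp only [coe_image, Set.mem_image, mem_coe] at hx hy
    obtain ⟨u, hu, rfl⟩ := hx
    obtain ⟨v, hv, rfl⟩ := hy
    have huv : u ≠ v := fun h => hxy (by rw [h])
    have hd := P.disjoint hu hv huv
    simp only [Function.onFun, id] at hd ⊢
    rw [Finset.disjoint_left] at hd ⊢
    intro a ha hav
    exact hd (Finset.mem_subtype.1 ha) (Finset.mem_subtype.1 hav)
  sup_parts := by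
    rw [Finset.eq_univ_iff_forall]
    intro b
    rw [Finset.mem_sup]
    exact ⟨(P.part b).subtype (· ∈ s), mem_image_of_mem _ (P.part_mem.2 b.2),
      Finset.mem_subtype.2 (P.mem_part b.2)⟩
  bot_notMem := by
    intro h
    simp only [bot_eq_empty, mem_image] at h
    obtain ⟨u, hu, hue⟩ := h
    obtain ⟨a, ha⟩ := P.nonempty_of_mem_parts hu
    have has : a ∈ s := P.le hu ha
    have : (⟨a, has⟩ : {x // x ∈ s}) ∈ u.subtype (· ∈ s) := Finset.mem_subtype.2 ha
    rw [hue] at this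
    exact absurd this (Finset.notMem_empty _)

/-- A finpartition of `univ` on the subtype gives a finpartition of the finset `s`. -/
def ofAttach [DecidableEq α] {s : Finset α} (Q : Finpartition (univ : Finset {x // x ∈ s})) :
    Finpartition s where
  parts := Q.parts.image (fun v => v.map (Function.Embedding.subtype _))
  supIndep := by
    rw [Finset.supIndep_iff_pairwiseDisjoint]
    rintro x hx y hy hxy
    simp only [coe_image, Set.mem_image, mem_coe] at hx hy
    obtain ⟨u, hu, rfl⟩ := hx
    obtain ⟨v, hv, rfl⟩ := hy
    have huv : u ≠ v := fun h => hxy (by rw [h])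
    have hd := Q.disjoint hu hv huv
    simp only [Function.onFun, id] at hd ⊢
    exact (Finset.disjoint_map _).mpr hd
  sup_parts := by
    apply Finset.ext
    intro b
    rw [Finset.mem_sup]
    constructor
    · rintro ⟨v, hv, hb⟩
      simp only [id, Finset.mem_image] at hv
      obtain ⟨w, hw, rfl⟩ := hv
      simp only [id_eq, Finset.mem_map, Function.Embedding.coe_subtype] at hb
      obtain ⟨a, _, rfl⟩ := hb
      exact a.2
    · intro hb
      refine ⟨(Q.part ⟨b, hb⟩).map (Function.Embedding.subtype _),
        mem_image_of_mem _ (Q.part_mem.2 (mem_univ _)), ?_⟩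
      exact Finset.mem_map.2 ⟨⟨b, hb⟩, Q.mem_part (mem_univ _), rfl⟩
  bot_notMem := by
    intro h
    simp only [bot_eq_empty, mem_image, Finset.map_eq_empty] at h
    obtain ⟨u, hu, rfl⟩ := h
    exact Q.bot_notMem hu

/-- Finpartitions of `s` are equivalent to finpartitions of `univ` on the subtype. -/
def attachEquiv [DecidableEq α] (s : Finset α) :
    Finpartition s ≃ Finpartition (univ : Finset {x // x ∈ s}) where
  toFun := toAttach
  invFun := ofAttach
  left_inv P := by
    apply Finpartition.ext
    simp only [toAttach, ofAttach, Finset.image_image]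
    refine Finset.image_congr (fun u hu => ?_) |>.trans (Finset.image_id)
    simp only [Function.comp_apply]
    rw [Finset.subtype_map, Finset.filter_true_of_mem (fun a ha => P.le hu ha)]
    rfl
  right_inv Q := by
    apply Finpartition.ext
    simp only [toAttach, ofAttach, Finset.image_image]
    refine Finset.image_congr (fun v hv => ?_) |>.trans (Finset.image_id)
    simp only [Function.comp_apply]
    apply Finset.ext
    intro a
    simp only [Finset.mem_subtype, Finset.mem_map, Function.Embedding.coe_subtype]
    constructor
    · rintro ⟨b, hb, h⟩
      rwa [show b = a from Subtype.ext h] at hb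
    · intro ha; exact ⟨a, ha, rfl⟩

/-- The Bell number. -/
noncomputable def bell (n : ℕ) : ℕ := Nat.card (Finpartition (univ : Finset (Fin n)))

lemma card_finpartition_eq_bell [DecidableEq α] (s : Finset α) :
    Nat.card (Finpartition s) = bell s.card :=
  Nat.card_congr ((attachEquiv s).trans (equivCongr s.equivFin))

lemma bell_zero : bell 0 = 1 := by
  rw [bell, show (univ : Finset (Fin 0)) = ⊥ from rfl]
  exact Nat.card_unique

/-- The parts of `P.avoid t` for `t` a part: just erase `t`. -/
lemma avoid_parts_of_mem [DecidableEq α] {s : Finset α} (P : Finpartition s) {t : Finset α}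
    (ht : t ∈ P.parts) : (P.avoid t).parts = P.parts.erase t := by
  ext u
  rw [Finpartition.mem_avoid, Finset.mem_erase]
  constructor
  · rintro ⟨d, hd, hdt, rfl⟩
    have hne : d ≠ t := fun h => hdt (h ▸ le_refl _)
    have hdisj : Disjoint d t := P.disjoint hd ht hne
    rw [Finset.sdiff_eq_self_of_disjoint hdisj]
    exact ⟨hne, hd⟩
  · rintro ⟨hne, hu⟩
    have hdisj : Disjoint u t := P.disjoint hu ht hne
    refine ⟨u, hu, fun hle => ?_, Finset.sdiff_eq_self_of_disjoint hdisj⟩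
    have : u = ⊥ := by
      have := hdisj.mono_right hle
      simpa using this.eq_bot_of_le le_rfl
    exact P.bot_notMem (this ▸ hu)

lemma sig_ext {γ : Type*} [DecidableEq γ] {p : Finset γ → Prop}
    {x y : Σ s : {s : Finset γ // p s}, Finpartition s.val}
    (h1 : x.1.val = y.1.val) (h2 : x.2.parts = y.2.parts) : x = y := by
  obtain ⟨⟨s, hs⟩, P⟩ := x
  obtain ⟨⟨t, ht⟩, Q⟩ := y
  dsimp at h1
  subst h1
  obtain rfl : P = Q := Finpartition.ext h2
  rfl

variable {n : ℕ}

lemma last_mem_compl {s : Finset (Fin (n + 1))} (hs : Fin.last n ∉ s) : Fin.last n ∈ sᶜ :=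
  Finset.mem_compl.2 hs

lemma compl_ne_bot {s : Finset (Fin (n + 1))} (hs : Fin.last n ∉ s) : sᶜ ≠ (⊥ : Finset _) := by
  intro h
  have := last_mem_compl hs
  rw [h] at this
  exact absurd this (Finset.notMem_empty _)

lemma sup_compl_univ (s : Finset (Fin (n + 1))) : s ⊔ sᶜ = univ := by
  rw [sup_compl_eq_top, Finset.top_eq_univ]

/-- The structural equivalence behind the Bell recurrence. -/
def sigEquiv (n : ℕ) : Finpartition (univ : Finset (Fin (n + 1))) ≃
    Σ s : {s : Finset (Fin (n + 1)) // Fin.last n ∉ s}, Finpartition s.val where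
  toFun P := ⟨⟨(P.part (Fin.last n))ᶜ, by
      simp only [Finset.mem_compl, not_not]
      exact P.mem_part (mem_univ _)⟩,
    (P.avoid (P.part (Fin.last n))).copy (Finset.compl_eq_univ_sdiff _).symm⟩
  invFun x := Finpartition.extend x.2 (b := x.1.valᶜ) (c := univ) (compl_ne_bot x.1.2)
    disjoint_compl_right (sup_compl_univ _)
  left_inv P := by
    apply Finpartition.ext
    simp only [Finpartition.extend, compl_compl, Finpartition.copy_parts,
      avoid_parts_of_mem P (P.part_mem.2 (mem_univ _))]
    exact Finset.insert_erase (P.part_mem.2 (mem_univ _))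
  right_inv := by
    rintro ⟨⟨s, hs⟩, Q⟩
    have hmem : sᶜ ∈ (Q.extend (b := sᶜ) (c := univ) (compl_ne_bot hs)
        disjoint_compl_right (sup_compl_univ _)).parts := Finset.mem_insert_self _ _
    have hpart : (Q.extend (b := sᶜ) (c := univ) (compl_ne_bot hs)
        disjoint_compl_right (sup_compl_univ _)).part (Fin.last n) = sᶜ :=
      Finpartition.part_eq_of_mem _ hmem (last_mem_compl hs)
    apply sig_ext
    · dsimp only
      rw [hpart, compl_compl]
    · dsimp only
      rw [Finpartition.copy_parts, hpart, avoid_parts_of_mem _ hmem]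
      show (insert sᶜ Q.parts).erase sᶜ = Q.parts
      rw [Finset.erase_insert]
      intro hmem'
      have hle : sᶜ ⊆ s := Q.le hmem'
      exact hs (hle (last_mem_compl hs))

lemma bell_succ (n : ℕ) : bell (n + 1) = ∑ j ∈ range (n + 1), n.choose j * bell j := by
  have h1 : bell (n + 1)
      = ∑ s : {s : Finset (Fin (n + 1)) // Fin.last n ∉ s}, bell s.val.card := by
    rw [bell, Nat.card_congr (sigEquiv n), Nat.card_eq_fintype_card, Fintype.card_sigma]
    exact Finset.sum_congr rfl fun s _ => by
      rw [← Nat.card_eq_fintype_card, card_finpartition_eq_bell]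
  rw [h1]
  have h2 : ∑ s : {s : Finset (Fin (n + 1)) // Fin.last n ∉ s}, bell s.val.card
      = ∑ s ∈ ((univ : Finset (Fin (n + 1))).erase (Fin.last n)).powerset, bell s.card := by
    refine (Finset.sum_subtype (p := fun s => Fin.last n ∉ s)
      ((univ : Finset (Fin (n + 1))).erase (Fin.last n)).powerset (fun x => ?_)
      (fun s => bell s.card)).symm
    rw [Finset.mem_powerset, Finset.subset_erase]
    simp
  rw [h2, Finset.powerset_card_disjiUnion]
  refine (Finset.sum_disjiUnion _ _ _).trans ?_
  have hcard : ((univ : Finset (Fin (n + 1))).erase (Fin.last n)).card = n := by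
    rw [Finset.card_erase_of_mem (mem_univ _), Finset.card_univ, Fintype.card_fin]
    omega
  rw [hcard]
  refine Finset.sum_congr rfl fun j hj => ?_
  rw [Finset.sum_congr rfl (fun s hs => by
      rw [(Finset.mem_powersetCard.1 hs).2]),
    Finset.sum_const, Finset.card_powersetCard, hcard, smul_eq_mul]

lemma key (n : ℕ) : Summable (fun k : ℕ => (k : ℝ) ^ n / (Nat.factorial k : ℝ)) ∧
    (∑' k : ℕ, (k : ℝ) ^ n / (Nat.factorial k : ℝ)) = Real.exp 1 * bell n := by
  induction n using Nat.strong_induction_on with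
  | _ n ih =>
    match n with
    | 0 =>
      have he : (fun k : ℕ => (k : ℝ) ^ 0 / (Nat.factorial k : ℝ))
          = fun k : ℕ => (1 : ℝ) ^ k / (Nat.factorial k : ℝ) := by
        funext k; simp
      constructor
      · rw [he]; exact Real.summable_pow_div_factorial 1
      · rw [he, bell_zero]
        have : Real.exp 1 = ∑' k : ℕ, (1 : ℝ) ^ k / (Nat.factorial k : ℝ) := by
          rw [Real.exp_eq_exp_ℝ, NormedSpace.exp_eq_tsum_div]
        rw [this]
        simp
    | (m + 1) =>
      set g : ℕ → ℝ := fun k => ((k : ℝ) + 1) ^ m / (Nat.factorial k : ℝ) with hg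
      have hgeq : g = fun k : ℕ => ∑ j ∈ range (m + 1),
          (m.choose j : ℝ) * ((k : ℝ) ^ j / (Nat.factorial k : ℝ)) := by
        funext k
        rw [hg]
        simp only
        rw [add_pow, Finset.sum_div]
        refine Finset.sum_congr rfl fun j hj => ?_
        ring
      have hsum_j : ∀ j ∈ range (m + 1),
          Summable (fun k : ℕ => (m.choose j : ℝ) * ((k : ℝ) ^ j / (Nat.factorial k : ℝ))) :=
        fun j hj => ((ih j (Finset.mem_range.1 hj)).1).mul_left _
      have hg_sum : Summable g := by
        rw [hgeq]; exact summable_sum hsum_j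
      have hg_tsum : ∑' k, g k = ∑ j ∈ range (m + 1),
          (m.choose j : ℝ) * (Real.exp 1 * bell j) := by
        rw [hgeq, Summable.tsum_finsetSum hsum_j]
        refine Finset.sum_congr rfl fun j hj => ?_
        rw [tsum_mul_left, (ih j (Finset.mem_range.1 hj)).2]
      have hshift : ∀ k : ℕ, ((k + 1 : ℕ) : ℝ) ^ (m + 1) / (Nat.factorial (k + 1) : ℝ) = g k := by
        intro k
        rw [hg]
        simp only [Nat.factorial_succ, Nat.cast_mul, Nat.cast_add, Nat.cast_one]
        rw [pow_succ]
        have hk1 : ((k : ℝ) + 1) ≠ 0 := by positivity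
        field_simp
      have hf_sum : Summable (fun k : ℕ => (k : ℝ) ^ (m + 1) / (Nat.factorial k : ℝ)) := by
        rw [← summable_nat_add_iff 1]
        exact hg_sum.congr fun k => (hshift k).symm
      refine ⟨hf_sum, ?_⟩
      rw [Summable.tsum_eq_zero_add hf_sum]
      simp only [Nat.cast_zero, Nat.factorial_zero, Nat.cast_one]
      rw [zero_pow (Nat.succ_ne_zero m), zero_div, zero_add]
      have : ∑' k : ℕ, ((k + 1 : ℕ) : ℝ) ^ (m + 1) / (Nat.factorial (k + 1) : ℝ) = ∑' k, g k :=
        tsum_congr hshift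
      rw [this, hg_tsum, bell_succ m]
      push_cast
      rw [Finset.mul_sum]
      refine Finset.sum_congr rfl fun j hj => ?_
      ring

end DobAux


/-- Dobiński's formula: the Bell number `B n`, defined as the number of partitions of a
set with `n` elements into nonempty pairwise disjoint subsets, equals
`e⁻¹ ∑_{k=0}^∞ k^n / k!`, and this series converges. -/
theorem dobinski_formula (n : ℕ) (hn : 1 ≤ n) :
    Summable (fun k : ℕ => (k : ℝ) ^ n / (Nat.factorial k : ℝ)) ∧
    ((Nat.card (Finpartition (Finset.univ : Finset (Fin n))) : ℝ) =
      (Real.exp 1)⁻¹ * ∑' k : ℕ, (k : ℝ) ^ n / (Nat.factorial k : ℝ)) := by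
  refine ⟨(DobAux.key n).1, ?_⟩
  rw [(DobAux.key n).2, ← mul_assoc, inv_mul_cancel₀ (Real.exp_ne_zero 1), one_mul]
  rfl
end

section
/- Weak law of large numbers for cycle counts: let N^{(n)}(σ) denote the total number of cycles of a permutation σ of {1,...,n} (fixed points counting as cycles of length 1). Under the uniform probability measure P_n on the symmetric group S_n, N^{(n)}/log n converges in probability to 1; that is, for every ε > 0, lim_{n→∞} P_n(|N^{(n)}/log n − 1| ≥ ε) = 0. -/
open Filter

/-- The total number of cycles of a permutation `σ` of `Fin n`: orbits of size at least two
are counted by `σ.cycleType`, and fixed points count as cycles of length 1. -/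
def totalCycleCount {n : ℕ} (σ : Equiv.Perm (Fin n)) : ℕ :=
  Multiset.card σ.cycleType + (Finset.univ.filter fun x => σ x = x).card

namespace CycleWLLN

open Equiv Equiv.Perm Finset

variable {α : Type*} [Fintype α] [DecidableEq α]

/-- General version of `totalCycleCount`. -/
def pc (σ : Equiv.Perm α) : ℕ :=
  Multiset.card σ.cycleType + (Finset.univ.filter fun x => σ x = x).card

lemma totalCycleCount_eq {n : ℕ} (σ : Equiv.Perm (Fin n)) : totalCycleCount σ = pc σ := rfl

lemma pc_eq (σ : Equiv.Perm α) :
    pc σ = Multiset.card σ.cycleType + (Fintype.card α - σ.support.card) := by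
  unfold pc
  congr 1
  have h := Finset.card_filter_add_card_filter_not (s := (univ : Finset α))
    (p := fun x => σ x = x)
  have hs : σ.support.card = (univ.filter fun x => ¬ σ x = x).card := rfl
  rw [card_univ] at h
  omega

lemma support_card_le (σ : Equiv.Perm α) : σ.support.card ≤ Fintype.card α :=
  (card_le_card (subset_univ _)).trans_eq card_univ.symm

/-- Key combinatorial lemma: multiplying on the left by `swap x (σ x)` (which detaches `x`
from its cycle) increases the total cycle count by one. -/
lemma pc_swap_mul {σ : Equiv.Perm α} {x : α} (hx : σ x ≠ x) :
    pc (Equiv.swap x (σ x) * σ) = pc σ + 1 := by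
  classical
  set c := σ.cycleOf x with hc
  have hmem : c ∈ σ.cycleFactorsFinset := cycleOf_mem_cycleFactorsFinset_iff.mpr (Equiv.Perm.mem_support.mpr hx)
  have hdis : Equiv.Perm.Disjoint (σ * c⁻¹) c :=
    disjoint_mul_inv_of_mem_cycleFactorsFinset hmem
  set g := σ * c⁻¹ with hg
  have hσ : σ = g * c := by rw [hg, inv_mul_cancel_right]
  have hcx : c x = σ x := cycleOf_apply_self σ x
  have hcsx : c (σ x) = σ (σ x) := cycleOf_apply_apply_self σ x
  have hσσx : σ (σ x) ≠ σ x := fun h => hx (σ.injective h)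
  have hgx : g x = x := by
    rcases hdis x with h | h
    · exact h
    · rw [hcx] at h; exact absurd h hx
  have hgsx : g (σ x) = σ x := by
    rcases hdis (σ x) with h | h
    · exact h
    · rw [hcsx] at h; exact absurd h hσσx
  have hswapg : Equiv.Perm.Disjoint (Equiv.swap x (σ x)) g := by
    intro a
    by_cases ha : a = x
    · subst ha; exact Or.inr hgx
    by_cases ha2 : a = σ x
    · subst ha2; exact Or.inr hgsx
    · exact Or.inl (Equiv.swap_apply_of_ne_of_ne ha ha2)
  have keyeq : Equiv.swap x (σ x) * σ = g * (Equiv.swap x (σ x) * c) := by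
    have h' : Equiv.swap x (σ x) * (g * c) = g * (Equiv.swap x (σ x) * c) := by
      rw [← mul_assoc, hswapg.commute.eq, mul_assoc]
    rw [← hσ] at h'
    exact h'
  have hxsupc : x ∈ c.support := by
    rw [mem_support, hcx]; exact hx
  have hccyc : c.IsCycle := isCycle_cycleOf σ hx
  by_cases h2 : σ (σ x) = x
  · -- the cycle of x is a transposition; it disappears
    have hceq : c = Equiv.swap x (σ x) := by
      have := hccyc.eq_swap_of_apply_apply_eq_self (by rw [hcx]; exact hx)
        (by rw [hcx, hcsx]; exact h2)
      rwa [hcx] at this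
    have hres : Equiv.swap x (σ x) * σ = g := by
      rw [keyeq, ← hceq]
      simp [hceq]
    have hct : σ.cycleType = g.cycleType + c.cycleType := by
      conv_lhs => rw [hσ]
      exact hdis.cycleType_mul
    have hctc : c.cycleType = {2} := by
      rw [hccyc.cycleType, hceq, card_support_swap (Ne.symm hx)]
    have hsupp : σ.support.card = g.support.card + 2 := by
      conv_lhs => rw [hσ, hdis.support_mul]
      rw [card_union_of_disjoint hdis.disjoint_support, hceq,
        card_support_swap (Ne.symm hx)]
    have hle := support_card_le σ
    rw [hres, pc_eq, pc_eq, hct, hctc]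
    simp only [Multiset.card_add, Multiset.card_singleton]
    omega
  · -- the cycle of x shrinks by one
    have hccx : c (c x) ≠ x := by rw [hcx, hcsx]; exact h2
    have hcyc' : (Equiv.swap x (c x) * c).IsCycle :=
      hccyc.swap_mul (by rw [hcx]; exact hx) hccx
    have hsupp' : (Equiv.swap x (c x) * c).support = c.support \ {x} :=
      support_swap_mul_eq c x hccx
    have hdis' : Equiv.Perm.Disjoint g (Equiv.swap x (c x) * c) := by
      rw [disjoint_iff_disjoint_support, hsupp']
      exact Finset.disjoint_of_subset_right (sdiff_subset)
        hdis.disjoint_support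
    have hres : Equiv.swap x (σ x) * σ = g * (Equiv.swap x (c x) * c) := by
      rw [keyeq, hcx]
    have hct : σ.cycleType = g.cycleType + c.cycleType := by
      conv_lhs => rw [hσ]
      exact hdis.cycleType_mul
    have hct' : (g * (Equiv.swap x (c x) * c)).cycleType =
        g.cycleType + (Equiv.swap x (c x) * c).cycleType := hdis'.cycleType_mul
    have hsc2 : 2 ≤ c.support.card := hccyc.two_le_card_support
    have hsuppσ : σ.support.card = g.support.card + c.support.card := by
      conv_lhs => rw [hσ, hdis.support_mul]
      exact card_union_of_disjoint hdis.disjoint_support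
    have hsuppres : (g * (Equiv.swap x (c x) * c)).support.card =
        g.support.card + (c.support.card - 1) := by
      rw [hdis'.support_mul, card_union_of_disjoint hdis'.disjoint_support, hsupp',
        card_sdiff_of_subset (by simpa using hxsupc), card_singleton]
    have hle := support_card_le σ
    rw [hres, pc_eq, pc_eq, hct, hct', hccyc.cycleType, hcyc'.cycleType, hsuppres]
    simp only [Multiset.card_add, Multiset.coe_card, List.length_singleton, Multiset.card_singleton]
    omega

end CycleWLLN

namespace CycleWLLN

open Equiv Equiv.Perm Finset

/-- The equivalence between `Fin n` and the nonzero elements of `Fin (n+1)`. -/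
def finSuccNeZeroEquiv (n : ℕ) : Fin n ≃ {x : Fin (n + 1) // x ≠ 0} where
  toFun x := ⟨x.succ, Fin.succ_ne_zero x⟩
  invFun x := x.1.pred x.2
  left_inv x := by simp
  right_inv x := by simp [Fin.succ_pred]

lemma decompose_zero_eq_extendDomain {n : ℕ} (e : Perm (Fin n)) :
    Equiv.Perm.decomposeFin.symm (0, e) = e.extendDomain (finSuccNeZeroEquiv n) := by
  refine Equiv.ext fun x => ?_
  refine Fin.cases ?_ (fun i => ?_) x
  · rw [Equiv.Perm.decomposeFin_symm_apply_zero,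
      Equiv.Perm.extendDomain_apply_not_subtype _ _ (by simp)]
  · rw [Equiv.Perm.decomposeFin_symm_apply_succ]
    have h := Equiv.Perm.extendDomain_apply_image e (finSuccNeZeroEquiv n) i
    simp only [finSuccNeZeroEquiv, Equiv.coe_fn_mk] at h ⊢
    rw [h, Equiv.swap_self]
    rfl

lemma pc_decompose_zero {n : ℕ} (e : Perm (Fin n)) :
    pc (Equiv.Perm.decomposeFin.symm (0, e)) = pc e + 1 := by
  unfold pc
  have hct : (Equiv.Perm.decomposeFin.symm (0, e)).cycleType = e.cycleType := by
    rw [decompose_zero_eq_extendDomain, Equiv.Perm.cycleType_extendDomain]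
  rw [hct]
  have hfix : (Finset.univ.filter fun x => Equiv.Perm.decomposeFin.symm (0, e) x = x).card =
      (Finset.univ.filter fun x => e x = x).card + 1 := by
    rw [Finset.card_filter, Finset.card_filter, Fin.sum_univ_succ]
    have h0 : (if Equiv.Perm.decomposeFin.symm (0, e) (0 : Fin (n + 1)) = 0 then 1 else 0) = 1 := by
      simp
    rw [h0]
    have : ∀ i : Fin n,
        (if Equiv.Perm.decomposeFin.symm (0, e) i.succ = i.succ then 1 else 0) =
        (if e i = i then 1 else 0) := by
      intro i
      rw [Equiv.Perm.decomposeFin_symm_apply_succ]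
      simp [Fin.succ_inj]
    rw [Finset.sum_congr rfl fun i _ => this i]
    exact Nat.add_comm _ _
  omega

lemma pc_decompose_ne_zero {n : ℕ} {p : Fin (n + 1)} (hp : p ≠ 0) (e : Perm (Fin n)) :
    pc (Equiv.Perm.decomposeFin.symm (p, e)) = pc e := by
  have hswap : Equiv.Perm.decomposeFin.symm (p, e) =
      Equiv.swap 0 p * Equiv.Perm.decomposeFin.symm (0, e) := by
    ext x
    refine Fin.cases ?_ (fun i => ?_) x
    · simp [Equiv.Perm.decomposeFin_symm_apply_zero]
    · simp [Equiv.Perm.decomposeFin_symm_apply_succ]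
  set σ := Equiv.Perm.decomposeFin.symm (p, e) with hσ
  have hσ0 : σ 0 = p := Equiv.Perm.decomposeFin_symm_apply_zero p e
  have hx : σ 0 ≠ 0 := by rw [hσ0]; exact hp
  have hkey := pc_swap_mul hx
  have hback : Equiv.swap 0 (σ 0) * σ = Equiv.Perm.decomposeFin.symm (0, e) := by
    rw [hσ0, hswap, ← mul_assoc, Equiv.swap_mul_self, one_mul]
  rw [hback, pc_decompose_zero] at hkey
  omega

end CycleWLLN

namespace CycleWLLN

open Equiv Equiv.Perm Finset

lemma sum_rec (F : ℕ → ℝ) (n : ℕ) :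
    ∑ σ : Perm (Fin (n + 1)), F (pc σ) =
      ∑ e : Perm (Fin n), (F (pc e + 1) + n * F (pc e)) := by
  rw [← Equiv.sum_comp (Equiv.Perm.decomposeFin.symm :
      (Fin (n + 1) × Perm (Fin n)) ≃ Perm (Fin (n + 1))) (fun σ => F (pc σ)),
    Fintype.sum_prod_type]
  rw [Fin.sum_univ_succ]
  simp only [pc_decompose_zero, pc_decompose_ne_zero (Fin.succ_ne_zero _)]
  rw [Finset.sum_add_distrib]
  congr 1
  rw [Finset.sum_comm]
  refine Finset.sum_congr rfl fun e _ => ?_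
  rw [Finset.sum_const, Finset.card_univ, Fintype.card_fin, nsmul_eq_mul]

lemma moment1 (n : ℕ) :
    ∑ σ : Perm (Fin n), (pc σ : ℝ) = (Nat.factorial n : ℝ) * (harmonic n : ℝ) := by
  induction n with
  | zero =>
    simp [pc, Equiv.Perm.cycleType_one]
  | succ n ih =>
    rw [sum_rec (fun k => (k : ℝ)) n]
    push_cast
    rw [Finset.sum_add_distrib, Finset.sum_add_distrib, ← Finset.mul_sum, ih,
      Finset.sum_const, Finset.card_univ, Fintype.card_perm, Fintype.card_fin,
      nsmul_eq_mul, harmonic_succ]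
    push_cast
    have h1 : ((n + 1 : ℕ) : ℝ) ≠ 0 := by positivity
    simp only [Nat.factorial_succ]
    push_cast
    field_simp
    ring

lemma moment2 (n : ℕ) :
    ∑ σ : Perm (Fin n), (pc σ : ℝ) ^ 2 ≤
      (Nat.factorial n : ℝ) * ((harmonic n : ℝ) ^ 2 + (harmonic n : ℝ)) := by
  induction n with
  | zero =>
    have : ∀ σ : Perm (Fin 0), (pc σ : ℝ) ^ 2 = 0 := by
      intro σ
      rw [Subsingleton.elim σ 1]
      simp [pc, Equiv.Perm.cycleType_one]
    rw [Finset.sum_congr rfl fun σ _ => this σ, Finset.sum_const, smul_zero]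
    simp
  | succ n ih =>
    rw [sum_rec (fun k => (k : ℝ) ^ 2) n]
    push_cast
    have hfac : (0 : ℝ) < (Nat.factorial n : ℝ) := by positivity
    have hH : (0 : ℝ) ≤ (harmonic n : ℝ) := by
      rcases Nat.eq_zero_or_pos n with h | h
      · subst h; simp
      · have := harmonic_pos (n := n) h.ne'
        positivity
    have hsum1 := moment1 n
    have expand : ∑ e : Perm (Fin n), (((pc e : ℝ) + 1) ^ 2 + (n : ℝ) * (pc e : ℝ) ^ 2) =
        ((n : ℝ) + 1) * (∑ e : Perm (Fin n), (pc e : ℝ) ^ 2) +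
          2 * (∑ e : Perm (Fin n), (pc e : ℝ)) + (Nat.factorial n : ℝ) := by
      have : ∀ e : Perm (Fin n), ((pc e : ℝ) + 1) ^ 2 + (n : ℝ) * (pc e : ℝ) ^ 2 =
          ((n : ℝ) + 1) * (pc e : ℝ) ^ 2 + 2 * (pc e : ℝ) + 1 := by intro e; ring
      rw [Finset.sum_congr rfl fun e _ => this e, Finset.sum_add_distrib,
        Finset.sum_add_distrib, ← Finset.mul_sum, ← Finset.mul_sum, Finset.sum_const,
        Finset.card_univ, Fintype.card_perm, Fintype.card_fin, nsmul_eq_mul, mul_one]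
    rw [expand, hsum1]
    have hstep : ((n : ℝ) + 1) * ((Nat.factorial n : ℝ) * ((harmonic n : ℝ) ^ 2 + (harmonic n : ℝ))) +
        2 * ((Nat.factorial n : ℝ) * (harmonic n : ℝ)) + (Nat.factorial n : ℝ) ≤
        (Nat.factorial (n + 1) : ℝ) * ((harmonic (n + 1) : ℝ) ^ 2 + (harmonic (n + 1) : ℝ)) := by
      rw [harmonic_succ, Nat.factorial_succ]
      push_cast
      have ha : (0 : ℝ) < ((n : ℝ) + 1) := by positivity
      have key : ((n : ℝ) + 1) * (((n : ℝ) + 1)⁻¹) = 1 := by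
        field_simp
      nlinarith [sq_nonneg (((n : ℝ) + 1)⁻¹), mul_pos hfac ha,
        mul_nonneg hfac.le hH, inv_nonneg.mpr ha.le,
        mul_nonneg (mul_nonneg hfac.le hH) (inv_nonneg.mpr ha.le)]
    calc ((n : ℝ) + 1) * (∑ e : Perm (Fin n), (pc e : ℝ) ^ 2) +
          2 * ((Nat.factorial n : ℝ) * (harmonic n : ℝ)) + (Nat.factorial n : ℝ)
        ≤ ((n : ℝ) + 1) * ((Nat.factorial n : ℝ) * ((harmonic n : ℝ) ^ 2 + (harmonic n : ℝ))) +
          2 * ((Nat.factorial n : ℝ) * (harmonic n : ℝ)) + (Nat.factorial n : ℝ) := by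
          have : (0 : ℝ) ≤ (n : ℝ) + 1 := by positivity
          nlinarith [ih]
      _ ≤ _ := hstep

end CycleWLLN

open CycleWLLN in
/-- Weak law of large numbers for the total number of cycles of a uniformly random
permutation of `{1,...,n}`: `N⁽ⁿ⁾ / log n` converges in probability to `1`. -/
theorem cycleCount_wlln :
    ∀ ε : ℝ, 0 < ε →
      Tendsto (fun n : ℕ =>
          (Nat.card {σ : Equiv.Perm (Fin n) //
              ε ≤ |(totalCycleCount σ : ℝ) / Real.log n - 1|} : ℝ) / (Nat.factorial n : ℝ))
        atTop (nhds 0) := by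
  classical
  intro ε hε
  have hε2 : (0 : ℝ) < ε ^ 2 := by positivity
  have key : ∀ n : ℕ, 2 ≤ Real.log n →
      (Nat.card {σ : Equiv.Perm (Fin n) //
          ε ≤ |(totalCycleCount σ : ℝ) / Real.log n - 1|} : ℝ) / (Nat.factorial n : ℝ)
        ≤ 2 / (ε ^ 2 * Real.log n) := by
    intro n hL2
    set L := Real.log n with hLdef
    have hL0 : (0 : ℝ) < L := by linarith
    have hn1 : n ≠ 0 := by
      rintro rfl
      have : L = 0 := by simp [hLdef]
      linarith
    have hnR : (0 : ℝ) < (n : ℝ) := by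
      exact_mod_cast Nat.pos_of_ne_zero hn1
    have hfac : (0 : ℝ) < (Nat.factorial n : ℝ) := by positivity
    set H := ((harmonic n : ℚ) : ℝ) with hHdef
    have hLH : L ≤ H := by
      have h1 : Real.log (n : ℝ) ≤ Real.log ((n : ℝ) + 1) :=
        (Real.log_le_log_iff hnR (by linarith)).mpr (by linarith)
      have h2 := log_add_one_le_harmonic n
      push_cast at h2
      linarith
    have hHL1 : H ≤ L + 1 := by
      have := harmonic_le_one_add_log n
      linarith
    have hm1 := moment1 n
    have hm2 := moment2 n
    simp only [← totalCycleCount_eq] at hm1 hm2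
    have hvar : ∑ σ : Equiv.Perm (Fin n), ((totalCycleCount σ : ℝ) - L) ^ 2 ≤
        (Nat.factorial n : ℝ) * (L + 2) := by
      have expand : ∑ σ : Equiv.Perm (Fin n), ((totalCycleCount σ : ℝ) - L) ^ 2 =
          ∑ σ : Equiv.Perm (Fin n), (totalCycleCount σ : ℝ) ^ 2 -
            2 * L * (∑ σ : Equiv.Perm (Fin n), (totalCycleCount σ : ℝ)) +
            (Nat.factorial n : ℝ) * L ^ 2 := by
        have h : ∀ σ : Equiv.Perm (Fin n), ((totalCycleCount σ : ℝ) - L) ^ 2 =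
            (totalCycleCount σ : ℝ) ^ 2 - 2 * L * (totalCycleCount σ : ℝ) + L ^ 2 :=
          fun σ => by ring
        rw [Finset.sum_congr rfl fun σ _ => h σ, Finset.sum_add_distrib,
          Finset.sum_sub_distrib, ← Finset.mul_sum, Finset.sum_const, Finset.card_univ,
          Fintype.card_perm, Fintype.card_fin, nsmul_eq_mul]
      rw [expand, hm1]
      have hd : (H - L) ^ 2 + H - (L + 2) ≤ 0 := by nlinarith
      nlinarith [mul_nonpos_of_nonneg_of_nonpos hfac.le hd]
    set B := Finset.univ.filter
      (fun σ : Equiv.Perm (Fin n) => ε ≤ |(totalCycleCount σ : ℝ) / L - 1|) with hBdef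
    have hcard : (Nat.card {σ : Equiv.Perm (Fin n) //
        ε ≤ |(totalCycleCount σ : ℝ) / Real.log n - 1|} : ℝ) = (B.card : ℝ) := by
      rw [Nat.card_eq_fintype_card, Fintype.card_subtype]
    have cheb : (B.card : ℝ) * (ε * L) ^ 2 ≤
        ∑ σ : Equiv.Perm (Fin n), ((totalCycleCount σ : ℝ) - L) ^ 2 := by
      have h1 : ∀ σ ∈ B, (ε * L) ^ 2 ≤ ((totalCycleCount σ : ℝ) - L) ^ 2 := by
        intro σ hσ
        rw [hBdef, Finset.mem_filter] at hσ
        have h2 : ε * L ≤ |(totalCycleCount σ : ℝ) / L - 1| * L :=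
          mul_le_mul_of_nonneg_right hσ.2 hL0.le
        have h3 : |(totalCycleCount σ : ℝ) / L - 1| * L = |(totalCycleCount σ : ℝ) - L| := by
          rw [← abs_of_pos hL0, ← abs_mul, abs_of_pos hL0]
          congr 1
          field_simp
        rw [h3] at h2
        calc (ε * L) ^ 2 ≤ |(totalCycleCount σ : ℝ) - L| ^ 2 :=
              pow_le_pow_left₀ (by positivity) h2 2
          _ = _ := sq_abs _
      calc (B.card : ℝ) * (ε * L) ^ 2 = ∑ _σ ∈ B, (ε * L) ^ 2 := by
            rw [Finset.sum_const, nsmul_eq_mul]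
        _ ≤ ∑ σ ∈ B, ((totalCycleCount σ : ℝ) - L) ^ 2 := Finset.sum_le_sum h1
        _ ≤ ∑ σ : Equiv.Perm (Fin n), ((totalCycleCount σ : ℝ) - L) ^ 2 :=
            Finset.sum_le_sum_of_subset_of_nonneg (Finset.subset_univ B)
              (fun i _ _ => sq_nonneg _)
    have hmain : (B.card : ℝ) * (ε * L) ^ 2 ≤ (Nat.factorial n : ℝ) * (L + 2) :=
      cheb.trans hvar
    rw [hcard, div_le_div_iff₀ hfac (by positivity)]
    have hBnn : (0 : ℝ) ≤ (B.card : ℝ) := by positivity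
    refine le_of_mul_le_mul_right ?_ hL0
    nlinarith [hmain, hL2, hfac, hBnn]
  have hlog : Tendsto (fun n : ℕ => Real.log n) atTop atTop :=
    Real.tendsto_log_atTop.comp tendsto_natCast_atTop_atTop
  refine squeeze_zero' (g := fun n : ℕ => 2 / (ε ^ 2 * Real.log n)) ?_ ?_ ?_
  · filter_upwards with n
    positivity
  · filter_upwards [hlog.eventually_ge_atTop 2] with n hn using key n hn
  · exact Tendsto.div_atTop tendsto_const_nhds (Tendsto.const_mul_atTop hε2 hlog)
end

section
/- Moments of cycle counts equal Touchard polynomial values: for i ≥ 1 let C_m^{(n)}(σ) denote the number of cycles of length m of a permutation σ of {1,...,n}, and let E_n denote expectation with respect to the uniform probability measure on S_n. Then for all positive integers m, k, n with n ≥ mk, E_n[(C_m^{(n)})^k] = \sum_{l=0}^{k} S(k,l) (1/m)^l, where S(k,l) denotes the Stirling number of the second kind. -/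
/-- `cycleCountOfLength i σ` is the number of cycles (orbits) of `σ` of length exactly `i`. -/
noncomputable def cycleCountOfLength {n : ℕ} (i : ℕ) (σ : Equiv.Perm (Fin n)) : ℕ :=
  Nat.card {x : Fin n // Nat.card {y : Fin n // σ.SameCycle x y} = i} / i

/-- The Stirling numbers of the second kind `stirlingSecond k l`, the number of partitions
of a set of `k` labelled elements into `l` nonempty subsets. -/
def stirlingSecond : ℕ → ℕ → ℕ
  | 0, 0 => 1
  | 0, _ + 1 => 0
  | _ + 1, 0 => 0
  | k + 1, l + 1 => (l + 1) * stirlingSecond k (l + 1) + stirlingSecond k l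


open Equiv Equiv.Perm Function Finset

variable {α : Type*} [Fintype α] [DecidableEq α]

lemma perm_mem_periodicPts (σ : Perm α) (x : α) : x ∈ periodicPts σ := by
  refine mk_mem_periodicPts (orderOf_pos σ) ?_
  show σ^[orderOf σ] x = x
  simp [Equiv.Perm.iterate_eq_pow, pow_orderOf_eq_one]

lemma orbSize_eq_minimalPeriod (σ : Perm α) (x : α) :
    Nat.card {y // σ.SameCycle x y} = minimalPeriod σ x := by
  have hp : 0 < minimalPeriod σ x := minimalPeriod_pos_of_mem_periodicPts (perm_mem_periodicPts σ x)
  have hb : Function.Bijective (fun j : Fin (minimalPeriod σ x) =>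
      (⟨σ^[(j : ℕ)] x, ⟨(j : ℕ), by simp [Equiv.Perm.iterate_eq_pow]⟩⟩ : {y // σ.SameCycle x y})) := by
    constructor
    · intro a b hab
      have := Subtype.mk.injEq .. ▸ hab
      have h2 : (a : ℕ) = b :=
        iterate_injOn_Iio_minimalPeriod (Set.mem_Iio.2 a.isLt) (Set.mem_Iio.2 b.isLt)
          (by simpa using congrArg Subtype.val hab)
      exact Fin.ext h2
    · rintro ⟨y, hy⟩
      obtain ⟨i, hi, hiy⟩ := hy.exists_pow_eq'
      refine ⟨⟨i % minimalPeriod σ x, Nat.mod_lt _ hp⟩, ?_⟩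
      ext
      show σ^[i % minimalPeriod σ x] x = y
      rw [iterate_mod_minimalPeriod_eq]
      simpa [Equiv.Perm.iterate_eq_pow] using hiy
  calc Nat.card {y // σ.SameCycle x y} = Nat.card (Fin (minimalPeriod σ x)) :=
        (Nat.card_eq_of_bijective _ hb).symm
    _ = minimalPeriod σ x := by simp

set_option linter.unusedSectionVars false

open Equiv Equiv.Perm Function Finset

variable {α : Type*} [Fintype α] [DecidableEq α]

lemma minimalPeriod_eq_of_cycle {σ : Perm α} {x : α} {m : ℕ} (hm : 0 < m)
    (hfix : (σ ^ m) x = x)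
    (hinj : Set.InjOn (fun j => σ^[j] x) (Set.Iio m)) : minimalPeriod σ x = m := by
  have hper : IsPeriodicPt σ m x := by
    show σ^[m] x = x; simpa [Equiv.Perm.iterate_eq_pow] using hfix
  have hdvd : minimalPeriod σ x ∣ m := IsPeriodicPt.minimalPeriod_dvd hper
  have hpos : 0 < minimalPeriod σ x := IsPeriodicPt.minimalPeriod_pos hm hper
  rcases lt_or_eq_of_le (Nat.le_of_dvd hm hdvd) with h | h
  · exfalso
    have h0 : σ^[minimalPeriod σ x] x = σ^[0] x := by
      simp [iterate_minimalPeriod]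
    have := hinj (Set.mem_Iio.2 h) (Set.mem_Iio.2 hm) h0
    omega
  · exact h

lemma minimalPeriod_eq_of_sameCycle {σ : Perm α} {x y : α} (h : σ.SameCycle x y) :
    minimalPeriod σ x = minimalPeriod σ y := by
  rw [← orbSize_eq_minimalPeriod, ← orbSize_eq_minimalPeriod]
  exact Nat.card_congr (Equiv.subtypeEquivRight fun z => ⟨h.symm.trans, h.trans⟩)

set_option linter.unusedSectionVars false

open Equiv Equiv.Perm Function Finset

variable {α : Type*} [Fintype α] [DecidableEq α]

/-- The cycle of `x` as a finset. -/
def cyc (σ : Perm α) (x : α) : Finset α := univ.filter (fun y => σ.SameCycle x y)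

/-- The points lying on cycles of length `m`. -/
noncomputable def mPts (m : ℕ) (σ : Perm α) : Finset α := univ.filter (fun x => minimalPeriod σ x = m)

lemma card_cyc (σ : Perm α) (x : α) : (cyc σ x).card = minimalPeriod σ x := by
  rw [← orbSize_eq_minimalPeriod]
  rw [Nat.card_eq_fintype_card, Fintype.card_subtype]
  rfl

lemma mem_cyc {σ : Perm α} {x y : α} : y ∈ cyc σ x ↔ σ.SameCycle x y := by
  simp [cyc]

lemma mem_mPts {m : ℕ} {σ : Perm α} {x : α} : x ∈ mPts m σ ↔ minimalPeriod σ x = m := by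
  simp [mPts]

lemma m_dvd_card (m : ℕ) (σ : Perm α) : ∀ s : Finset α,
    (∀ x ∈ s, minimalPeriod σ x = m) →
    (∀ x ∈ s, ∀ y, σ.SameCycle x y → y ∈ s) → m ∣ s.card := by
  intro s
  induction s using Finset.strongInduction with
  | _ s ih =>
    intro hmem hsat
    rcases s.eq_empty_or_nonempty with rfl | ⟨x, hx⟩
    · simp
    · have hsub : cyc σ x ⊆ s := fun y hy => hsat x hx y (mem_cyc.1 hy)
      have hne : (cyc σ x).Nonempty := ⟨x, mem_cyc.2 (SameCycle.refl σ x)⟩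
      have hss : s \ cyc σ x ⊂ s := Finset.sdiff_ssubset hsub hne
      have hdvd : m ∣ (s \ cyc σ x).card := by
        refine ih _ hss (fun y hy => hmem y (mem_sdiff.1 hy).1) ?_
        intro y hy z hz
        rw [mem_sdiff] at hy ⊢
        refine ⟨hsat y hy.1 z hz, fun hc => hy.2 ?_⟩
        exact mem_cyc.2 ((mem_cyc.1 hc).trans hz.symm)
      have hcyc : (cyc σ x).card = m := by rw [card_cyc, hmem x hx]
      have := Finset.card_sdiff_add_card_eq_card hsub
      obtain ⟨c, hc⟩ := hdvd
      exact ⟨c + 1, by rw [Nat.mul_add, Nat.mul_one, ← hc]; omega⟩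

lemma m_dvd_card_mPts (m : ℕ) (σ : Perm α) : m ∣ (mPts m σ).card := by
  refine m_dvd_card m σ _ (fun x hx => mem_mPts.1 hx) ?_
  intro x hx y hxy
  rw [mem_mPts] at hx ⊢
  rw [← minimalPeriod_eq_of_sameCycle hxy, hx]

lemma cycleCount_eq {n : ℕ} (m : ℕ) (σ : Perm (Fin n)) :
    cycleCountOfLength m σ = (mPts m σ).card / m := by
  unfold cycleCountOfLength
  congr 1
  rw [Nat.card_eq_fintype_card, Fintype.card_subtype]
  apply congrArg Finset.card
  apply Finset.filter_congr
  intro x _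
  simp only [orbSize_eq_minimalPeriod]

set_option linter.unusedSectionVars false

open Equiv Equiv.Perm Function Finset

variable {α : Type*} [Fintype α] [DecidableEq α]

/-- `Good σ m x` : the `x i` lie on cycles of length `m`, pairwise distinct cycles. -/
def Good (σ : Perm α) (m : ℕ) {l : ℕ} (x : Fin l → α) : Prop :=
  (∀ i, minimalPeriod σ (x i) = m) ∧ ∀ i j, i ≠ j → ¬ σ.SameCycle (x i) (x j)

/-- splitting off the first coordinate -/
noncomputable def goodSuccEquiv (σ : Perm α) (m : ℕ) (l : ℕ) :
    {x : Fin (l + 1) → α // Good σ m x} ≃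
      Σ _x : {x : Fin l → α // Good σ m x},
        {a : α // minimalPeriod σ a = m ∧ ∀ i, ¬ σ.SameCycle (_x.1 i) a} where
  toFun := fun ⟨f, hf⟩ =>
    ⟨⟨Fin.tail f, ⟨fun i => hf.1 i.succ,
        fun i j hij => hf.2 i.succ j.succ (fun h => hij (Fin.succ_injective _ h))⟩⟩,
      ⟨f 0, hf.1 0, fun i => hf.2 i.succ 0 (Fin.succ_ne_zero i)⟩⟩
  invFun := fun ⟨⟨x, hx⟩, ⟨a, ha⟩⟩ =>
    ⟨Fin.cons a x, by
      constructor
      · intro i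
        induction i using Fin.cases with
        | zero => simpa using ha.1
        | succ i => simpa using hx.1 i
      · intro i j hij
        induction i using Fin.cases with
        | zero =>
          induction j using Fin.cases with
          | zero => exact absurd rfl hij
          | succ j => simpa using fun h => ha.2 j h.symm
        | succ i =>
          induction j using Fin.cases with
          | zero => simpa using ha.2 i
          | succ j =>
            simpa using hx.2 i j (fun h => hij (by rw [h]))⟩
  left_inv := fun ⟨f, hf⟩ => by
    ext : 1
    exact Fin.cons_self_tail f
  right_inv := fun ⟨⟨x, hx⟩, ⟨a, ha⟩⟩ => by
    refine Sigma.ext ?_ ?_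
    · ext : 1
      funext i
      simp [Fin.tail_cons]
    · simp only [Fin.cons_zero]
      apply Subtype.heq_iff_coe_eq ?_ |>.2 rfl
      intro b
      rw [Fin.tail_cons]
  
lemma card_fiber (σ : Perm α) (m : ℕ) {l : ℕ} (x : Fin l → α) (hx : Good σ m x) :
    Nat.card {a : α // minimalPeriod σ a = m ∧ ∀ i, ¬ σ.SameCycle (x i) a}
      = (mPts m σ).card - l * m := by
  classical
  have hB : ∀ i : Fin l, cyc σ (x i) ⊆ mPts m σ := by
    intro i y hy
    rw [mem_mPts, ← minimalPeriod_eq_of_sameCycle (mem_cyc.1 hy), hx.1 i]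
  set B : Finset α := univ.biUnion (fun i : Fin l => cyc σ (x i)) with hBdef
  have hBsub : B ⊆ mPts m σ := by
    intro y hy
    obtain ⟨i, _, hi⟩ := Finset.mem_biUnion.1 hy
    exact hB i hi
  have hBcard : B.card = l * m := by
    rw [hBdef, Finset.card_biUnion]
    · rw [Finset.sum_congr rfl (fun i _ => by rw [card_cyc, hx.1 i])]
      simp [Finset.card_univ, Nat.mul_comm]
    · intro i _ j _ hij
      rw [Function.onFun, Finset.disjoint_left]
      intro a hai haj
      exact hx.2 i j hij ((mem_cyc.1 hai).trans (mem_cyc.1 haj).symm)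
  have hset : (mPts m σ \ B) = univ.filter
      (fun a => minimalPeriod σ a = m ∧ ∀ i, ¬ σ.SameCycle (x i) a) := by
    ext a
    simp [mem_mPts, hBdef, mem_cyc]
  rw [Nat.card_eq_fintype_card, Fintype.card_subtype, ← hset,
    Finset.card_sdiff_of_subset hBsub, hBcard]

lemma card_good (σ : Perm α) (m : ℕ) (l : ℕ) :
    Nat.card {x : Fin l → α // Good σ m x}
      = ∏ i ∈ Finset.range l, ((mPts m σ).card - i * m) := by
  classical
  induction l with
  | zero =>
    rw [Finset.prod_range_zero]
    have : ∀ x : Fin 0 → α, Good σ m x := by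
      intro x
      exact ⟨fun i => i.elim0, fun i => i.elim0⟩
    rw [Nat.card_eq_fintype_card]
    rw [Fintype.card_eq_one_iff]
    exact ⟨⟨fun i => i.elim0, this _⟩, fun ⟨y, hy⟩ => Subtype.ext (funext fun i => i.elim0)⟩
  | succ l ih =>
    rw [Nat.card_congr (goodSuccEquiv σ m l), Finset.prod_range_succ, ← ih]
    rw [Nat.card_eq_fintype_card, Fintype.card_sigma]
    simp only [← Nat.card_eq_fintype_card]
    rw [Finset.sum_congr rfl (fun x _ => card_fiber σ m x.1 x.2), Finset.sum_const,
      Finset.card_univ, smul_eq_mul, Nat.card_eq_fintype_card]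

set_option linter.unusedSectionVars false
set_option maxHeartbeats 1000000

open Equiv Equiv.Perm Function Finset

variable {α : Type*} [Fintype α] [DecidableEq α] {m l : ℕ}

open Fin.NatCast

lemma iterate_mul_fix {σ : Perm α} {z : α} (hz : σ^[m] z = z) :
    ∀ q : ℕ, σ^[m * q] z = z := by
  intro q
  induction q with
  | zero => simp
  | succ q ih => rw [Nat.mul_succ, iterate_add_apply, hz, ih]

lemma iterate_mod {σ : Perm α} {z : α} (hz : σ^[m] z = z) (hm : 0 < m) (k : ℕ) :
    σ^[k] z = σ^[k % m] z := by
  conv_lhs => rw [← Nat.mod_add_div k m]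
  rw [iterate_add_apply, iterate_mul_fix hz]

lemma sameCycle_iterate (σ : Perm α) (z : α) (j : ℕ) : σ.SameCycle z (σ^[j] z) :=
  ⟨(j : ℤ), by simp [zpow_natCast, Equiv.Perm.iterate_eq_pow]⟩

section GoodData

variable {σ : Perm α} {x : Fin l → α}

lemma good_iterate_fix (hx : Good σ m x) (i : Fin l) : σ^[m] (x i) = x i := by
  conv_lhs => rw [← hx.1 i]
  exact iterate_minimalPeriod

lemma good_inj (hx : Good σ m x) :
    Function.Injective (fun p : Fin l × Fin m => σ^[(p.2 : ℕ)] (x p.1)) := by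
  rintro ⟨i, j⟩ ⟨i', j'⟩ h
  simp only at h
  have hsc : σ.SameCycle (x i) (x i') :=
    (sameCycle_iterate σ (x i) j).trans (h ▸ (sameCycle_iterate σ (x i') j').symm)
  have hii : i = i' := by
    by_contra hne
    exact hx.2 i i' hne hsc
  subst hii
  have hj : (j : ℕ) = (j' : ℕ) := by
    apply iterate_injOn_Iio_minimalPeriod (f := ⇑σ) (x := x i)
    · rw [hx.1 i]; exact Set.mem_Iio.2 j.isLt
    · rw [hx.1 i]; exact Set.mem_Iio.2 j'.isLt
    · exact h
  exact Prod.ext rfl (Fin.ext hj)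

/-- The embedding built from a good tuple: `(i,j) ↦ σ^j (x i)`. -/
def goodEmb (hx : Good σ m x) : Fin l × Fin m ↪ α :=
  ⟨fun p => σ^[(p.2 : ℕ)] (x p.1), good_inj hx⟩

lemma goodEmb_apply (hx : Good σ m x) (p : Fin l × Fin m) :
    goodEmb hx p = σ^[(p.2 : ℕ)] (x p.1) := rfl

lemma goodEmb_natCast [NeZero m] (hx : Good σ m x) (i : Fin l) (k : ℕ) :
    goodEmb hx (i, (k : Fin m)) = σ^[k] (x i) := by
  have hm : 0 < m := Nat.pos_of_ne_zero (NeZero.ne m)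
  rw [goodEmb_apply, Fin.val_natCast]
  exact (iterate_mod (good_iterate_fix hx i) hm k).symm

lemma mem_range_goodEmb [NeZero m] (hx : Good σ m x) {y : α} :
    y ∈ Set.range (goodEmb hx) ↔ ∃ i, σ.SameCycle (x i) y := by
  constructor
  · rintro ⟨⟨i, j⟩, rfl⟩
    exact ⟨i, sameCycle_iterate σ (x i) j⟩
  · rintro ⟨i, hi⟩
    obtain ⟨k, _, hk⟩ := hi.exists_pow_eq'
    refine ⟨(i, (k : Fin m)), ?_⟩
    rw [goodEmb_natCast hx]
    simpa [Equiv.Perm.iterate_eq_pow] using hk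

lemma sigma_goodEmb [NeZero m] (hx : Good σ m x) (p : Fin l × Fin m) :
    σ (goodEmb hx p) = goodEmb hx (p.1, p.2 + 1) := by
  obtain ⟨i, j⟩ := p
  have h1 : σ (goodEmb hx (i, j)) = σ^[(j : ℕ) + 1] (x i) := by
    rw [goodEmb_apply]
    exact (iterate_succ_apply' σ (j : ℕ) (x i)).symm
  rw [h1, ← goodEmb_natCast hx i ((j : ℕ) + 1)]
  congr 2
  push_cast
  rfl

lemma not_mem_range_goodEmb_iff [NeZero m] (hx : Good σ m x) {y : α} :
    y ∉ Set.range (goodEmb hx) ↔ ∀ i, ¬ σ.SameCycle (x i) y := by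
  rw [mem_range_goodEmb hx]
  push_neg
  rfl

lemma range_goodEmb_invariant [NeZero m] (hx : Good σ m x) (y : α) :
    y ∉ Set.range (goodEmb hx) ↔ σ y ∉ Set.range (goodEmb hx) := by
  rw [not_mem_range_goodEmb_iff hx, not_mem_range_goodEmb_iff hx]
  constructor
  · intro h i hc
    exact h i (Equiv.Perm.sameCycle_apply_right.1 hc)
  · intro h i hc
    exact h i (Equiv.Perm.sameCycle_apply_right.2 hc)

end GoodData

section P6
set_option linter.unusedSectionVars false
set_option maxHeartbeats 1000000
open Equiv Equiv.Perm Function Finset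

variable {α : Type*} [Fintype α] [DecidableEq α] {m l : ℕ}

/-- The rotation permutation on `Fin l × Fin m`. -/
def rotPerm (l m : ℕ) [NeZero m] : Perm (Fin l × Fin m) :=
  Equiv.prodCongr (Equiv.refl _) (Equiv.addRight 1)

lemma rotPerm_apply [NeZero m] (p : Fin l × Fin m) : rotPerm l m p = (p.1, p.2 + 1) := rfl

section Reverse

variable [NeZero m] (e : Fin l × Fin m ↪ α) {ρ : Perm α} (hρ : ∀ p, ρ (e p) = e p)

/-- The permutation rebuilt from an embedding and a permutation fixing its range. -/
noncomputable def rebuild (e : Fin l × Fin m ↪ α) (ρ : Perm α) : Perm α :=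
  ρ * (rotPerm l m).viaEmbedding e

include hρ in
lemma rebuild_apply_emb (p : Fin l × Fin m) :
    rebuild e ρ (e p) = e (p.1, p.2 + 1) := by
  unfold rebuild
  rw [Equiv.Perm.mul_apply, Equiv.Perm.viaEmbedding_apply, ← rotPerm_apply, hρ]

lemma rebuild_apply_of_not_mem {y : α} (hy : y ∉ Set.range e) :
    rebuild e ρ y = ρ y := by
  unfold rebuild
  rw [Equiv.Perm.mul_apply, Equiv.Perm.viaEmbedding_apply_of_notMem _ _ _ hy]

include hρ in
lemma rebuild_iterate (i : Fin l) (c : Fin m) (k : ℕ) :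
    (rebuild e ρ)^[k] (e (i, c)) = e (i, c + (k : Fin m)) := by
  induction k with
  | zero => simp
  | succ k ih =>
    rw [iterate_succ_apply', ih, rebuild_apply_emb e hρ]
    congr 1
    push_cast
    simp [add_assoc]

include hρ in
lemma good_rebuild :
    Good (rebuild e ρ) m (fun i => e (i, 0)) := by
  have hm : 0 < m := Nat.pos_of_ne_zero (NeZero.ne m)
  have hfix : ∀ i : Fin l, (rebuild e ρ)^[m] (e (i, 0)) = e (i, 0) := by
    intro i
    rw [rebuild_iterate e hρ]
    simp
  have hiter : ∀ (i : Fin l) (k : ℕ), (rebuild e ρ)^[k] (e (i, 0)) = e (i, (k : Fin m)) := by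
    intro i k
    rw [rebuild_iterate e hρ]
    simp
  constructor
  · intro i
    apply minimalPeriod_eq_of_cycle hm
    · show (rebuild e ρ)^[m] _ = _
      exact hfix i
    · intro a ha b hb hab
      simp only at hab
      rw [hiter, hiter] at hab
      have := e.injective hab
      have h2 : ((a : Fin m) : ℕ) = ((b : Fin m) : ℕ) := by
        rw [Prod.mk.injEq] at this
        rw [this.2]
      rwa [Fin.val_natCast, Fin.val_natCast, Nat.mod_eq_of_lt ha, Nat.mod_eq_of_lt hb] at h2
  · intro i j hij hc
    obtain ⟨k, _, hk⟩ := hc.exists_pow_eq'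
    have : (rebuild e ρ)^[k] (e (i, 0)) = e (j, 0) := by simpa [Equiv.Perm.iterate_eq_pow] using hk
    rw [hiter] at this
    exact hij (congrArg Prod.fst (e.injective this))

end Reverse
end P6

section P7
set_option linter.unusedSectionVars false
set_option maxHeartbeats 1000000
open Equiv Equiv.Perm Function Finset

variable {α : Type*} [Fintype α] [DecidableEq α] {m l : ℕ} [NeZero m]
variable {σ : Perm α} {x : Fin l → α}

lemma sigma_goodEmb_rot (hx : Good σ m x) (p : Fin l × Fin m) :
    σ (goodEmb hx p) = goodEmb hx (rotPerm l m p) := by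
  rw [sigma_goodEmb hx p, rotPerm_apply]

lemma viaEmbedding_inv (r : Perm (Fin l × Fin m)) (e : Fin l × Fin m ↪ α) :
    (r.viaEmbedding e)⁻¹ = r⁻¹.viaEmbedding e := by
  rw [← Equiv.Perm.viaEmbeddingHom_apply, ← Equiv.Perm.viaEmbeddingHom_apply, ← map_inv]

/-- The permutation `σ` with the marked cycles straightened out. -/
noncomputable def goodRho (hx : Good σ m x) : Perm α :=
  σ * ((rotPerm l m).viaEmbedding (goodEmb hx))⁻¹

lemma goodRho_fix (hx : Good σ m x) (p : Fin l × Fin m) :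
    goodRho hx (goodEmb hx p) = goodEmb hx p := by
  unfold goodRho
  rw [Equiv.Perm.mul_apply, viaEmbedding_inv,
    Equiv.Perm.viaEmbedding_apply ((rotPerm l m)⁻¹) (goodEmb hx) p,
    sigma_goodEmb_rot hx, ← Equiv.Perm.mul_apply, mul_inv_cancel, Equiv.Perm.one_apply]

lemma rebuild_goodRho (hx : Good σ m x) : rebuild (goodEmb hx) (goodRho hx) = σ := by
  unfold rebuild goodRho
  group

/-- The main bijection: a permutation together with a good tuple corresponds to an
embedding of `Fin l × Fin m` together with a permutation fixing its range pointwise. -/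
noncomputable def bigEquiv (m l : ℕ) [NeZero m] (α : Type*) [Fintype α] [DecidableEq α] :
    (Σ σ : Perm α, {x : Fin l → α // Good σ m x}) ≃
      Σ e : Fin l × Fin m ↪ α, {τ : Perm α // ∀ p, τ (e p) = e p} where
  toFun s := ⟨goodEmb s.2.2, goodRho s.2.2, goodRho_fix s.2.2⟩
  invFun t := ⟨rebuild t.1 t.2.1, fun i => t.1 (i, 0), good_rebuild t.1 t.2.2⟩
  left_inv := by
    rintro ⟨σ, x, hx⟩
    apply Sigma.subtype_ext
    · exact rebuild_goodRho hx
    · funext i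
      show goodEmb hx (i, 0) = x i
      simp [goodEmb_apply]
  right_inv := by
    rintro ⟨e, ρ, hρ⟩
    have hemb : goodEmb (good_rebuild e hρ) = e := by
      apply DFunLike.ext
      rintro ⟨i, j⟩
      show (rebuild e ρ)^[(j : ℕ)] (e (i, 0)) = e (i, j)
      rw [rebuild_iterate e hρ, zero_add, Fin.cast_val_eq_self]
    apply Sigma.subtype_ext
    · exact hemb
    · show goodRho (good_rebuild e hρ) = ρ
      unfold goodRho
      rw [hemb]
      unfold rebuild
      group
end P7

section P8
set_option linter.unusedSectionVars false
set_option maxHeartbeats 1000000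
open Equiv Equiv.Perm Function Finset Nat
open scoped Classical

variable {α : Type*} [Fintype α] [DecidableEq α] {m l : ℕ}

lemma fix_range_iff {e : Fin l × Fin m ↪ α} {τ : Perm α} (hτ : ∀ p, τ (e p) = e p) (y : α) :
    y ∉ Set.range e ↔ τ y ∉ Set.range e := by
  apply not_congr
  constructor
  · rintro ⟨p, rfl⟩
    exact ⟨p, (hτ p).symm⟩
  · rintro ⟨p, hp⟩
    have : τ y = τ (e p) := by rw [hτ p, hp]
    exact ⟨p, (τ.injective this).symm⟩

/-- Permutations fixing the range of `e` pointwise are permutations of the complement. -/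
noncomputable def fixSubtypeEquiv (e : Fin l × Fin m ↪ α) :
    {τ : Perm α // ∀ p, τ (e p) = e p} ≃ Perm {y : α // y ∉ Set.range e} where
  toFun := fun ⟨τ, hτ⟩ => τ.subtypePerm (fun y => (fix_range_iff hτ y).symm)
  invFun τ := ⟨Equiv.Perm.ofSubtype τ,
    fun p => Equiv.Perm.ofSubtype_apply_of_not_mem τ (not_not_intro ⟨p, rfl⟩)⟩
  left_inv := by
    rintro ⟨τ, hτ⟩
    apply Subtype.ext
    show Equiv.Perm.ofSubtype (τ.subtypePerm (fun y => (fix_range_iff hτ y).symm)) = τ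
    apply Equiv.ext
    intro y
    by_cases hy : y ∈ Set.range ⇑e
    · rw [Equiv.Perm.ofSubtype_apply_of_not_mem (p := fun z => z ∉ Set.range ⇑e)
        (τ.subtypePerm (fun y => (fix_range_iff hτ y).symm)) (not_not_intro hy)]
      obtain ⟨p, rfl⟩ := hy
      exact (hτ p).symm
    · rw [Equiv.Perm.ofSubtype_apply_of_mem (p := fun z => z ∉ Set.range ⇑e)
        (τ.subtypePerm (fun y => (fix_range_iff hτ y).symm)) hy]
      rfl
  right_inv := by
    intro τ
    apply Equiv.ext
    rintro ⟨y, hy⟩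
    apply Subtype.ext
    show Equiv.Perm.ofSubtype τ y = _
    rw [Equiv.Perm.ofSubtype_apply_of_mem (p := fun z => z ∉ Set.range ⇑e) τ hy]

lemma card_fix (e : Fin l × Fin m ↪ α) :
    Nat.card {τ : Perm α // ∀ p, τ (e p) = e p} = (Fintype.card α - l * m)! := by
  classical
  rw [Nat.card_congr (fixSubtypeEquiv e), Nat.card_eq_fintype_card, Fintype.card_perm]
  congr 1
  have h1 : Fintype.card {y : α // y ∉ Set.range e} =
      Fintype.card α - Fintype.card {y : α // y ∈ Set.range e} :=
    Fintype.card_subtype_compl _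
  rw [h1]
  congr 1
  have h2 : Fintype.card {y : α // y ∈ Set.range e} = Fintype.card (Set.range ⇑e) :=
    Fintype.card_congr (Equiv.refl _)
  rw [h2, Fintype.card_range e, Fintype.card_prod, Fintype.card_fin, Fintype.card_fin]

lemma sum_count (hm : 0 < m) (hln : l * m ≤ Fintype.card α) :
    ∑ σ : Perm α, ∏ i ∈ Finset.range l, ((mPts m σ).card - i * m)
      = (Fintype.card α)! := by
  classical
  haveI : NeZero m := ⟨hm.ne'⟩
  have h1 : ∑ σ : Perm α, ∏ i ∈ Finset.range l, ((mPts m σ).card - i * m)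
      = Nat.card (Σ σ : Perm α, {x : Fin l → α // Good σ m x}) := by
    rw [Nat.card_eq_fintype_card, Fintype.card_sigma]
    refine Finset.sum_congr rfl (fun σ _ => ?_)
    rw [← Nat.card_eq_fintype_card, card_good]
  rw [h1, Nat.card_congr (bigEquiv m l α), Nat.card_eq_fintype_card, Fintype.card_sigma]
  rw [Finset.sum_congr rfl (fun e _ => by
    rw [← Nat.card_eq_fintype_card, card_fix e])]
  rw [Finset.sum_const, Finset.card_univ, smul_eq_mul, Fintype.card_embedding_eq,
    Fintype.card_prod, Fintype.card_fin, Fintype.card_fin, mul_comm,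
    Nat.factorial_mul_descFactorial hln]
end P8

section P9
set_option linter.unusedSectionVars false
set_option maxHeartbeats 1000000
open Equiv Equiv.Perm Function Finset
open scoped Nat

lemma stirlingSecond_eq_zero_of_lt : ∀ {k l : ℕ}, k < l → stirlingSecond k l = 0 := by
  intro k
  induction k with
  | zero =>
    intro l hl
    obtain ⟨l', rfl⟩ := Nat.exists_eq_succ_of_ne_zero (by omega : l ≠ 0)
    rfl
  | succ k ih =>
    intro l hl
    obtain ⟨l', rfl⟩ := Nat.exists_eq_succ_of_ne_zero (by omega : l ≠ 0)
    show (l' + 1) * stirlingSecond k (l' + 1) + stirlingSecond k l' = 0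
    rw [ih (by omega), ih (by omega)]
    simp

lemma mul_descFactorial (x l : ℕ) :
    x * x.descFactorial l = x.descFactorial (l + 1) + l * x.descFactorial l := by
  rw [Nat.descFactorial_succ]
  rcases le_or_gt l x with h | h
  · rw [← Nat.add_mul, Nat.sub_add_cancel h]
  · rw [Nat.descFactorial_eq_zero_iff_lt.2 h]
    simp

lemma pow_eq_sum_stirling (x k : ℕ) :
    x ^ k = ∑ l ∈ Finset.range (k + 1), stirlingSecond k l * x.descFactorial l := by
  induction k with
  | zero => simp [stirlingSecond]
  | succ k ih =>
    have h1 : x ^ (k + 1) =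
        ∑ l ∈ Finset.range (k + 1), stirlingSecond k l * (x * x.descFactorial l) := by
      rw [pow_succ, ih, Finset.sum_mul]
      refine Finset.sum_congr rfl (fun l _ => by ring)
    rw [h1]
    have h2 : ∀ l, stirlingSecond k l * (x * x.descFactorial l)
        = stirlingSecond k l * x.descFactorial (l + 1)
          + l * stirlingSecond k l * x.descFactorial l := by
      intro l
      rw [mul_descFactorial]
      ring
    rw [Finset.sum_congr rfl (fun l _ => h2 l), Finset.sum_add_distrib]
    -- RHS: ∑_{l ∈ range (k+2)} stirlingSecond (k+1) l * desc l
    have h3 : ∑ l ∈ Finset.range (k + 2), stirlingSecond (k + 1) l * x.descFactorial l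
        = ∑ l ∈ Finset.range (k + 1), stirlingSecond (k + 1) (l + 1) * x.descFactorial (l + 1) := by
      rw [Finset.sum_range_succ']
      simp [stirlingSecond]
    rw [h3]
    have h4 : ∀ l, stirlingSecond (k + 1) (l + 1) * x.descFactorial (l + 1)
        = (l + 1) * stirlingSecond k (l + 1) * x.descFactorial (l + 1)
          + stirlingSecond k l * x.descFactorial (l + 1) := by
      intro l
      show (((l + 1) * stirlingSecond k (l + 1) + stirlingSecond k l)) * x.descFactorial (l+1) = _
      ring
    rw [Finset.sum_congr rfl (fun l _ => h4 l), Finset.sum_add_distrib, add_comm]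
    congr 1
    -- ∑_{l ∈ range (k+1)} l * S k l * desc l = ∑_{l ∈ range (k+1)} (l+1) * S k (l+1) * desc (l+1)
    rw [Finset.sum_range_succ' (fun l => l * stirlingSecond k l * x.descFactorial l) k]
    rw [Finset.sum_range_succ
      (fun l => (l + 1) * stirlingSecond k (l + 1) * x.descFactorial (l + 1)) k]
    rw [stirlingSecond_eq_zero_of_lt (Nat.lt_succ_self k)]
    simp

lemma descFactorial_div_mul_pow {m P : ℕ} (hm : 0 < m) (hP : m ∣ P) (l : ℕ) :
    (P / m).descFactorial l * m ^ l = ∏ i ∈ Finset.range l, (P - i * m) := by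
  induction l with
  | zero => simp
  | succ l ih =>
    rw [Nat.descFactorial_succ, Finset.prod_range_succ, ← ih, pow_succ]
    have key : (P / m - l) * m = P - l * m := by
      rw [Nat.sub_mul, Nat.div_mul_cancel hP]
    calc (P / m - l) * (P / m).descFactorial l * (m ^ l * m)
        = ((P / m - l) * m) * ((P / m).descFactorial l * m ^ l) := by ring
      _ = ((P / m).descFactorial l * m ^ l) * (P - l * m) := by rw [key]; ring

lemma sum_descFactorial_cycleCount {n m l : ℕ} (hm : 0 < m) (hln : l * m ≤ n) :
    (∑ σ : Perm (Fin n), (cycleCountOfLength m σ).descFactorial l) * m ^ l = n ! := by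
  classical
  have h1 : ∀ σ : Perm (Fin n), (cycleCountOfLength m σ).descFactorial l * m ^ l
      = ∏ i ∈ Finset.range l, ((mPts m σ).card - i * m) := by
    intro σ
    rw [cycleCount_eq m σ]
    exact descFactorial_div_mul_pow hm (m_dvd_card_mPts m σ) l
  rw [Finset.sum_mul, Finset.sum_congr rfl (fun σ _ => h1 σ)]
  have := sum_count (α := Fin n) (m := m) (l := l) hm (by simpa using hln)
  simpa using this
end P9


/-- For a uniformly random permutation of `{1,...,n}` with `n ≥ mk`, the `k`-th moment of
the number of cycles of length `m` equals `∑_{l=0}^{k} S(k,l) (1/m)^l`, the Touchard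
polynomial evaluated at `1/m`. -/
theorem cycleCount_moment_eq_touchard (m k n : ℕ) (hm : 1 ≤ m) (hk : 1 ≤ k)
    (hn : m * k ≤ n) :
    (1 / (Nat.factorial n : ℝ)) *
        ∑ σ : Equiv.Perm (Fin n), (cycleCountOfLength m σ : ℝ) ^ k =
      ∑ l ∈ Finset.range (k + 1), (stirlingSecond k l : ℝ) * (1 / (m : ℝ)) ^ l := by
  classical
  have hnf : (n.factorial : ℝ) ≠ 0 := by positivity
  have hmR : (m : ℝ) ≠ 0 := by positivity
  have key : ∀ l ∈ Finset.range (k + 1),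
      (∑ σ : Perm (Fin n), ((cycleCountOfLength m σ).descFactorial l : ℝ))
        = (n.factorial : ℝ) / (m : ℝ) ^ l := by
    intro l hl
    have hl' : l ≤ k := Nat.lt_succ_iff.1 (Finset.mem_range.1 hl)
    have hln : l * m ≤ n := le_trans (by
      calc l * m ≤ k * m := Nat.mul_le_mul_right m hl'
        _ = m * k := Nat.mul_comm k m) hn
    have hnat := sum_descFactorial_cycleCount (n := n) (m := m) (l := l) hm hln
    have hc := congrArg (fun t : ℕ => (t : ℝ)) hnat
    push_cast at hc
    rw [eq_div_iff (by positivity : ((m : ℝ) ^ l) ≠ 0)]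
    exact hc
  have expand : ∀ σ : Perm (Fin n), (cycleCountOfLength m σ : ℝ) ^ k
      = ∑ l ∈ Finset.range (k + 1),
          (stirlingSecond k l : ℝ) * ((cycleCountOfLength m σ).descFactorial l : ℝ) := by
    intro σ
    have := congrArg (fun t : ℕ => (t : ℝ)) (pow_eq_sum_stirling (cycleCountOfLength m σ) k)
    push_cast at this
    exact this
  rw [Finset.sum_congr rfl (fun σ _ => expand σ), Finset.sum_comm]
  rw [Finset.mul_sum]
  refine Finset.sum_congr rfl (fun l hl => ?_)
  rw [← Finset.mul_sum, key l hl]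
  rw [one_div, one_div, inv_pow, div_eq_mul_inv]
  field_simp
end

section
/- Threshold for isolated vertices in the Erdős–Rényi graph: let D_n denote the number of isolated (disconnected) vertices of G(n, p_n), and suppose p_n = (log n + c_n)/n with 0 < p_n < 1. (i) If lim_{n→∞} c_n = +∞, then lim_{n→∞} P_n(D_n = 0) = 1. (ii) If lim_{n→∞} c_n = −∞, then for every positive integer M, lim_{n→∞} P_n(D_n > M) = 1. -/
open MeasureTheory Filter

/-- The index set of potential edges: unordered pairs of distinct vertices of `{1,...,n}`. -/
abbrev EdgeIdx (n : ℕ) := {e : Sym2 (Fin n) // ¬ e.IsDiag}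

/-- The Bernoulli(`p`) measure on `Bool`: mass `p` at `true` and `1-p` at `false`. -/
noncomputable def bernoulliBool (p : ℝ) : Measure Bool :=
  ENNReal.ofReal p • Measure.dirac true + ENNReal.ofReal (1 - p) • Measure.dirac false

/-- The Erdős–Rényi measure `G(n,p)`: the product, over all unordered pairs of distinct
vertices, of Bernoulli(`p`) measures on `{0,1}` (here `Bool`). -/
noncomputable def erMeasure (n : ℕ) (p : ℝ) : Measure (EdgeIdx n → Bool) :=
  Measure.pi fun _ => bernoulliBool p

/-- The simple graph on `{1,...,n}` determined by the edge-indicator configuration `ω`: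
a pair `{i,j}` of distinct vertices is an edge exactly when its coordinate is `true`. -/
def erGraph (n : ℕ) (ω : EdgeIdx n → Bool) : SimpleGraph (Fin n) where
  Adj i j := ∃ h : ¬ (s(i, j) : Sym2 (Fin n)).IsDiag, ω ⟨s(i, j), h⟩ = true
  symm := by
    constructor
    intro i j hadj
    obtain ⟨h, hw⟩ := hadj
    have hswap : (s(i, j) : Sym2 (Fin n)) = s(j, i) := Sym2.eq_swap
    refine ⟨hswap ▸ h, ?_⟩
    have he : (⟨s(j, i), hswap ▸ h⟩ : EdgeIdx n) = ⟨s(i, j), h⟩ := Subtype.ext hswap.symm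
    rw [he]
    exact hw
  loopless := by
    constructor
    intro i hadj
    obtain ⟨h, _⟩ := hadj
    exact h (Sym2.mk_isDiag_iff.mpr rfl)

/-- The number of isolated (disconnected) vertices of the graph determined by `ω`. -/
noncomputable def isolatedCount (n : ℕ) (ω : EdgeIdx n → Bool) : ℕ :=
  Nat.card {v : Fin n // ∀ w : Fin n, ¬ (erGraph n ω).Adj v w}

section Helpers

variable {n : ℕ} {p : ℝ}

lemma bernoulliBool_false : bernoulliBool p {false} = ENNReal.ofReal (1 - p) := by
  simp [bernoulliBool, Measure.dirac_apply]

lemma bernoulliBool_univ (h0 : 0 ≤ p) (h1 : p ≤ 1) : bernoulliBool p Set.univ = 1 := by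
  simp only [bernoulliBool, Measure.coe_add, Measure.coe_smul, Pi.add_apply, Pi.smul_apply,
    Measure.dirac_apply, smul_eq_mul]
  simp only [Set.indicator_univ, Pi.one_apply, mul_one]
  rw [← ENNReal.ofReal_add h0 (by linarith)]
  norm_num

lemma isProbabilityMeasure_bernoulliBool (h0 : 0 ≤ p) (h1 : p ≤ 1) :
    IsProbabilityMeasure (bernoulliBool p) :=
  ⟨bernoulliBool_univ h0 h1⟩

lemma isProbabilityMeasure_erMeasure (h0 : 0 ≤ p) (h1 : p ≤ 1) :
    IsProbabilityMeasure (erMeasure n p) := by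
  haveI := isProbabilityMeasure_bernoulliBool (p := p) h0 h1
  exact Measure.pi.instIsProbabilityMeasure _

lemma meas_allFalse (h0 : 0 ≤ p) (h1 : p ≤ 1) (s : Finset (EdgeIdx n)) :
    erMeasure n p {ω | ∀ e ∈ s, ω e = false} = ENNReal.ofReal ((1 - p) ^ s.card) := by
  haveI := isProbabilityMeasure_bernoulliBool (p := p) h0 h1
  have hset : {ω : EdgeIdx n → Bool | ∀ e ∈ s, ω e = false} =
      Set.univ.pi (fun e => if e ∈ s then ({false} : Set Bool) else Set.univ) := by
    ext ω
    simp only [Set.mem_setOf_eq, Set.mem_pi, Set.mem_univ, forall_true_left]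
    constructor
    · intro h e
      by_cases he : e ∈ s
      · simp [he, h e he]
      · simp [he]
    · intro h e he
      have := h e
      simpa [he] using this
  rw [hset, erMeasure, Measure.pi_pi]
  have hfact : ∀ e : EdgeIdx n,
      bernoulliBool p (if e ∈ s then ({false} : Set Bool) else Set.univ) =
      if e ∈ s then ENNReal.ofReal (1 - p) else 1 := by
    intro e
    by_cases he : e ∈ s
    · simp [he, bernoulliBool_false]
    · rw [if_neg he, if_neg he]; exact bernoulliBool_univ h0 h1
  simp_rw [hfact]
  rw [Finset.prod_ite_mem, Finset.univ_inter, Finset.prod_const,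
    ENNReal.ofReal_pow (by linarith)]

/-- The set of potential edges incident to `v`. -/
def incident (n : ℕ) (v : Fin n) : Finset (EdgeIdx n) :=
  Finset.univ.filter (fun e => v ∈ e.val)

/-- The event that `v` is isolated. -/
def isolSet (n : ℕ) (v : Fin n) : Set (EdgeIdx n → Bool) :=
  {ω | ∀ w : Fin n, ¬ (erGraph n ω).Adj v w}

lemma isolSet_eq (v : Fin n) :
    isolSet n v = {ω | ∀ e ∈ incident n v, ω e = false} := by
  ext ω
  simp only [isolSet, Set.mem_setOf_eq]
  constructor
  · intro h e he
    simp only [incident, Finset.mem_filter, Finset.mem_univ, true_and] at he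
    set w := Sym2.Mem.other' he with hw
    have hev : e.val = s(v, w) := (Sym2.other_spec' he).symm
    by_contra hfalse
    have htrue : ω e = true := by
      cases he' : ω e
      · exact absurd he' hfalse
      · rfl
    have hne : ¬ (s(v, w) : Sym2 (Fin n)).IsDiag := hev ▸ e.prop
    refine h w ⟨hne, ?_⟩
    have : (⟨s(v, w), hne⟩ : EdgeIdx n) = e := Subtype.ext hev.symm
    rw [this]; exact htrue
  · rintro h w ⟨hne, htrue⟩
    have hmem : (⟨s(v, w), hne⟩ : EdgeIdx n) ∈ incident n v := by
      simp [incident]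
    rw [h _ hmem] at htrue
    exact Bool.false_ne_true htrue

lemma card_incident (v : Fin n) : (incident n v).card = n - 1 := by
  have hbij : (Finset.univ.erase v).card = (incident n v).card := by
    refine Finset.card_bij
      (fun w hw => ⟨s(v, w), by
        simp only [Finset.mem_erase] at hw
        simp [Sym2.mk_isDiag_iff, Ne.symm hw.1]⟩) ?_ ?_ ?_
    · intro w hw
      simp [incident]
    · intro a ha b hb hab
      have : (s(v, a) : Sym2 (Fin n)) = s(v, b) := congrArg Subtype.val hab
      exact (Sym2.congr_right).mp this
    · intro e he
      simp only [incident, Finset.mem_filter, Finset.mem_univ, true_and] at he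
      have hev : e.val = s(v, Sym2.Mem.other' he) := (Sym2.other_spec' he).symm
      refine ⟨Sym2.Mem.other' he, ?_, Subtype.ext hev.symm⟩
      simp only [Finset.mem_erase, Finset.mem_univ, and_true]
      intro hcontra
      apply e.prop
      rw [hev, hcontra]
      exact Sym2.mk_isDiag_iff.mpr rfl
  rw [← hbij, Finset.card_erase_of_mem (Finset.mem_univ v), Finset.card_univ, Fintype.card_fin]

lemma incident_inter (v w : Fin n) (hvw : v ≠ w) :
    incident n v ∩ incident n w =
      {⟨s(v, w), by simp [Sym2.mk_isDiag_iff, hvw]⟩} := by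
  ext e
  simp only [Finset.mem_inter, incident, Finset.mem_filter, Finset.mem_univ, true_and,
    Finset.mem_singleton]
  constructor
  · rintro ⟨h1, h2⟩
    exact Subtype.ext ((Sym2.mem_and_mem_iff hvw).mp ⟨h1, h2⟩)
  · rintro rfl
    constructor
    · exact Sym2.mem_mk_left v w
    · exact Sym2.mem_mk_right v w

lemma card_incident_union (v w : Fin n) (hvw : v ≠ w) :
    (incident n v ∪ incident n w).card = 2 * n - 3 := by
  have h1 := card_incident (n := n) v
  have h2 := card_incident (n := n) w
  have hi : (incident n v ∩ incident n w).card = 1 := by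
    rw [incident_inter v w hvw]; simp
  have := Finset.card_union_add_card_inter (incident n v) (incident n w)
  have hn : 2 ≤ n := by
    by_contra hc
    push_neg at hc
    interval_cases n
    · exact absurd v.2 (by omega)
    · exact hvw (Subsingleton.elim v w)
  omega

lemma meas_isolSet (h0 : 0 ≤ p) (h1 : p ≤ 1) (v : Fin n) :
    erMeasure n p (isolSet n v) = ENNReal.ofReal ((1 - p) ^ (n - 1)) := by
  rw [isolSet_eq, meas_allFalse h0 h1, card_incident]

lemma meas_isolSet_inter (h0 : 0 ≤ p) (h1 : p ≤ 1) (v w : Fin n) (hvw : v ≠ w) :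
    erMeasure n p (isolSet n v ∩ isolSet n w) =
      ENNReal.ofReal ((1 - p) ^ (2 * n - 3)) := by
  have hset : isolSet n v ∩ isolSet n w =
      {ω | ∀ e ∈ incident n v ∪ incident n w, ω e = false} := by
    rw [isolSet_eq, isolSet_eq]
    ext ω
    simp only [Set.mem_inter_iff, Set.mem_setOf_eq, Finset.mem_union]
    constructor
    · rintro ⟨hv, hw⟩ e he
      cases he with
      | inl h => exact hv e h
      | inr h => exact hw e h
    · intro h
      exact ⟨fun e he => h e (Or.inl he), fun e he => h e (Or.inr he)⟩
  rw [hset, meas_allFalse h0 h1, card_incident_union v w hvw]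

open scoped Classical in
lemma isolatedCount_eq_card (ω : EdgeIdx n → Bool) :
    isolatedCount n ω = (Finset.univ.filter (fun v => ω ∈ isolSet n v)).card := by
  classical
  rw [isolatedCount, Nat.card_eq_fintype_card, Fintype.card_subtype]
  congr 1
  apply Finset.filter_congr
  intro v _
  exact Iff.rfl

end Helpers
section Moments

variable {n : ℕ} {p : ℝ}

/-- The number of isolated vertices as a real-valued random variable. -/
noncomputable def Xre (n : ℕ) (ω : EdgeIdx n → Bool) : ℝ := (isolatedCount n ω : ℝ)

lemma Xre_eq_sum (ω : EdgeIdx n → Bool) :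
    Xre n ω = ∑ v : Fin n, (isolSet n v).indicator (fun _ => (1 : ℝ)) ω := by
  classical
  rw [Xre, isolatedCount_eq_card, Finset.card_filter]
  push_cast
  refine Finset.sum_congr rfl fun v _ => ?_
  rw [Set.indicator_apply]

lemma integral_Xre (h0 : 0 ≤ p) (h1 : p ≤ 1) :
    ∫ ω, Xre n ω ∂(erMeasure n p) = (n : ℝ) * (1 - p) ^ (n - 1) := by
  haveI := isProbabilityMeasure_erMeasure (n := n) h0 h1
  rw [integral_congr_ae (Eventually.of_forall (Xre_eq_sum))]
  rw [integral_finset_sum _ (fun i _ => Integrable.of_finite)]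
  have : ∀ v : Fin n, ∫ ω, (isolSet n v).indicator (fun _ => (1 : ℝ)) ω ∂(erMeasure n p)
      = (1 - p) ^ (n - 1) := by
    intro v
    rw [integral_indicator_const (1 : ℝ) MeasurableSet.of_discrete, smul_eq_mul, mul_one,
      measureReal_def, meas_isolSet h0 h1, ENNReal.toReal_ofReal (pow_nonneg (by linarith) _)]
  simp_rw [this]
  rw [Finset.sum_const, Finset.card_univ, Fintype.card_fin, nsmul_eq_mul]

lemma integral_Xre_sq (h0 : 0 ≤ p) (h1 : p ≤ 1) :
    ∫ ω, (Xre n ω) ^ 2 ∂(erMeasure n p)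
      = (n : ℝ) * (1 - p) ^ (n - 1)
        + (n : ℝ) * ((n - 1 : ℕ) : ℝ) * (1 - p) ^ (2 * n - 3) := by
  haveI := isProbabilityMeasure_erMeasure (n := n) h0 h1
  have hq : (0 : ℝ) ≤ 1 - p := by linarith
  have hXsq : ∀ ω, (Xre n ω) ^ 2 = ∑ v : Fin n, ∑ w : Fin n,
      (isolSet n v ∩ isolSet n w).indicator (fun _ => (1 : ℝ)) ω := by
    intro ω
    rw [sq, Xre_eq_sum, Finset.sum_mul_sum]
    refine Finset.sum_congr rfl fun v _ => Finset.sum_congr rfl fun w _ => ?_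
    rw [← Set.inter_indicator_mul]
    simp
  rw [integral_congr_ae (Eventually.of_forall hXsq)]
  rw [integral_finset_sum _ (fun i _ => Integrable.of_finite)]
  have hrow : ∀ v : Fin n,
      (∫ ω, (∑ w : Fin n, (isolSet n v ∩ isolSet n w).indicator (fun _ => (1 : ℝ)) ω)
        ∂(erMeasure n p))
      = (1 - p) ^ (n - 1) + ((n - 1 : ℕ) : ℝ) * (1 - p) ^ (2 * n - 3) := by
    intro v
    rw [integral_finset_sum _ (fun i _ => Integrable.of_finite)]
    have hterm : ∀ w : Fin n,
        (∫ ω, (isolSet n v ∩ isolSet n w).indicator (fun _ => (1 : ℝ)) ω ∂(erMeasure n p))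
        = ((erMeasure n p) (isolSet n v ∩ isolSet n w)).toReal := by
      intro w
      rw [integral_indicator_const (1 : ℝ) MeasurableSet.of_discrete, smul_eq_mul, mul_one, measureReal_def]
    simp_rw [hterm]
    rw [← Finset.add_sum_erase _ _ (Finset.mem_univ v)]
    congr 1
    · rw [Set.inter_self, meas_isolSet h0 h1, ENNReal.toReal_ofReal (pow_nonneg hq _)]
    · have : ∀ w ∈ Finset.univ.erase v,
          ((erMeasure n p) (isolSet n v ∩ isolSet n w)).toReal = (1 - p) ^ (2 * n - 3) := by
        intro w hw
        rw [meas_isolSet_inter h0 h1 v w (Ne.symm (Finset.ne_of_mem_erase hw)),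
          ENNReal.toReal_ofReal (pow_nonneg hq _)]
      rw [Finset.sum_congr rfl this, Finset.sum_const,
        Finset.card_erase_of_mem (Finset.mem_univ v), Finset.card_univ, Fintype.card_fin,
        nsmul_eq_mul]
  simp_rw [hrow]
  rw [Finset.sum_add_distrib, Finset.sum_const, Finset.sum_const, Finset.card_univ,
    Fintype.card_fin, nsmul_eq_mul, nsmul_eq_mul]
  ring

lemma variance_Xre (h0 : 0 ≤ p) (h1 : p ≤ 1) :
    ProbabilityTheory.variance (Xre n) (erMeasure n p)
      = (n : ℝ) * (1 - p) ^ (n - 1)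
        + (n : ℝ) * ((n - 1 : ℕ) : ℝ) * (1 - p) ^ (2 * n - 3)
        - ((n : ℝ) * (1 - p) ^ (n - 1)) ^ 2 := by
  haveI := isProbabilityMeasure_erMeasure (n := n) h0 h1
  rw [ProbabilityTheory.variance_eq_sub MemLp.of_discrete]
  have : ∫ ω, (Xre n ^ 2) ω ∂(erMeasure n p) = ∫ ω, (Xre n ω) ^ 2 ∂(erMeasure n p) := by
    simp [Pi.pow_apply]
  rw [this, integral_Xre_sq h0 h1, integral_Xre h0 h1]

end Moments
section PartOne

variable {n : ℕ} {p : ℝ}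

lemma meas_pos_isolated (h0 : 0 ≤ p) (h1 : p ≤ 1) :
    erMeasure n p {ω | isolatedCount n ω ≠ 0} ≤
      ENNReal.ofReal ((n : ℝ) * (1 - p) ^ (n - 1)) := by
  have hsub : {ω : EdgeIdx n → Bool | isolatedCount n ω ≠ 0} ⊆ ⋃ v : Fin n, isolSet n v := by
    intro ω hω
    simp only [Set.mem_setOf_eq, isolatedCount] at hω
    obtain ⟨⟨v, hv⟩⟩ := (Nat.card_ne_zero.mp hω).1
    exact Set.mem_iUnion.mpr ⟨v, hv⟩
  calc erMeasure n p {ω | isolatedCount n ω ≠ 0}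
      ≤ erMeasure n p (⋃ v : Fin n, isolSet n v) := measure_mono hsub
    _ ≤ ∑ v : Fin n, erMeasure n p (isolSet n v) := measure_iUnion_fintype_le _ _
    _ = ∑ _v : Fin n, ENNReal.ofReal ((1 - p) ^ (n - 1)) := by
        simp_rw [meas_isolSet h0 h1]
    _ = (n : ENNReal) * ENNReal.ofReal ((1 - p) ^ (n - 1)) := by
        rw [Finset.sum_const, Finset.card_univ, Fintype.card_fin, nsmul_eq_mul]
    _ = ENNReal.ofReal ((n : ℝ) * (1 - p) ^ (n - 1)) := by
        rw [ENNReal.ofReal_mul (by positivity), ENNReal.ofReal_natCast]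

lemma real_bound_one {n : ℕ} (hn : 1 ≤ n) {pp cc : ℝ} (hpc : pp = (Real.log n + cc) / n)
    (h0 : 0 < pp) (h1 : pp < 1) :
    (n : ℝ) * (1 - pp) ^ (n - 1) ≤ Real.exp (1 - cc) := by
  have hn' : (0 : ℝ) < n := by exact_mod_cast Nat.pos_of_ne_zero (by omega)
  have hpn : pp * n = Real.log n + cc := by
    rw [hpc]; field_simp
  have hq : (0 : ℝ) ≤ 1 - pp := by linarith
  have hcast : ((n - 1 : ℕ) : ℝ) = (n : ℝ) - 1 := by
    rw [Nat.cast_sub hn]; simp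
  have h2 : (1 - pp) ^ (n - 1) ≤ Real.exp (-pp) ^ (n - 1) :=
    pow_le_pow_left₀ hq (by linarith [Real.add_one_le_exp (-pp)]) _
  have h3 : Real.exp (-pp) ^ (n - 1) = Real.exp (((n - 1 : ℕ) : ℝ) * (-pp)) := by
    rw [← Real.exp_nat_mul]
  calc (n : ℝ) * (1 - pp) ^ (n - 1)
      ≤ (n : ℝ) * Real.exp (((n - 1 : ℕ) : ℝ) * (-pp)) := by
        rw [← h3]; exact mul_le_mul_of_nonneg_left h2 hn'.le
    _ = Real.exp (Real.log n + ((n - 1 : ℕ) : ℝ) * (-pp)) := by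
        rw [Real.exp_add, Real.exp_log hn']
    _ ≤ Real.exp (1 - cc) := by
        apply Real.exp_le_exp.mpr
        rw [hcast]
        nlinarith [hpn]

lemma part_one (p c : ℕ → ℝ)
    (hp : ∀ n : ℕ, 1 ≤ n → p n = (Real.log n + c n) / n ∧ 0 < p n ∧ p n < 1)
    (hc : Tendsto c atTop atTop) :
    Tendsto (fun n : ℕ => (erMeasure n (p n) {ω | isolatedCount n ω = 0}).toReal)
      atTop (nhds 1) := by
  have hlim : Tendsto (fun n : ℕ => 1 - Real.exp (1 - c n)) atTop (nhds 1) := by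
    have h1 : Tendsto (fun n : ℕ => 1 - c n) atTop atBot := by
      apply Filter.tendsto_atBot_add_const_left
      exact tendsto_neg_atBot_iff.mpr hc
    have h2 := (Real.tendsto_exp_atBot).comp h1
    have := tendsto_const_nhds (x := (1 : ℝ)) (f := atTop (α := ℕ)) |>.sub h2
    simpa using this
  refine tendsto_of_tendsto_of_tendsto_of_le_of_le' hlim tendsto_const_nhds ?_ ?_
  · filter_upwards [eventually_ge_atTop 1] with n hn
    obtain ⟨hpn, hp0, hp1⟩ := hp n hn
    haveI := isProbabilityMeasure_erMeasure (n := n) hp0.le hp1.le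
    have hcompl : {ω : EdgeIdx n → Bool | isolatedCount n ω = 0} =
        {ω | isolatedCount n ω ≠ 0}ᶜ := by
      ext ω; simp
    have hmeas : erMeasure n (p n) {ω | isolatedCount n ω = 0}
        = 1 - erMeasure n (p n) {ω | isolatedCount n ω ≠ 0} := by
      rw [hcompl, prob_compl_eq_one_sub MeasurableSet.of_discrete]
    have hle1 : erMeasure n (p n) {ω | isolatedCount n ω ≠ 0} ≤ 1 := prob_le_one
    rw [hmeas, ENNReal.toReal_sub_of_le hle1 ENNReal.one_ne_top, ENNReal.toReal_one]
    have hb : (erMeasure n (p n) {ω | isolatedCount n ω ≠ 0}).toReal ≤ Real.exp (1 - c n) := by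
      have h4 := ENNReal.toReal_mono ENNReal.ofReal_ne_top (meas_pos_isolated (n := n) hp0.le hp1.le)
      rw [ENNReal.toReal_ofReal (mul_nonneg (Nat.cast_nonneg n) (pow_nonneg (by linarith) _))] at h4
      exact h4.trans (real_bound_one hn hpn hp0 hp1)
    linarith
  · filter_upwards [eventually_ge_atTop 1] with n hn
    obtain ⟨hpn, hp0, hp1⟩ := hp n hn
    haveI := isProbabilityMeasure_erMeasure (n := n) hp0.le hp1.le
    have := ENNReal.toReal_mono ENNReal.one_ne_top
      (prob_le_one (μ := erMeasure n (p n)) (s := {ω | isolatedCount n ω = 0}))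
    simpa using this

end PartOne
section PartTwo

set_option maxHeartbeats 1000000 in
lemma key_two {n M : ℕ} {pp cc : ℝ} (hn : 2 ≤ n) (hM : 1 ≤ M)
    (hpc : pp = (Real.log n + cc) / n) (h0 : 0 < pp) (h1 : pp < 1)
    (hcc : cc ≤ 0) (hl2 : (Real.log n) ^ 2 / n ≤ 1 / 4) (hl1 : Real.log n / n ≤ 1 / 2)
    (hMe : 2 * (M : ℝ) ≤ Real.exp (-cc - 1)) :
    1 - (4 / Real.exp (-cc - 1) + 8 * (Real.log n / n))
      ≤ (erMeasure n pp {ω | M < isolatedCount n ω}).toReal ∧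
    (erMeasure n pp {ω | M < isolatedCount n ω}).toReal ≤ 1 := by
  haveI := isProbabilityMeasure_erMeasure (n := n) h0.le h1.le
  have hn' : (0 : ℝ) < n := by exact_mod_cast (by omega : 0 < n)
  have hlogn : (0 : ℝ) ≤ Real.log n := Real.log_nonneg (by exact_mod_cast (by omega : 1 ≤ n))
  have hpn : pp * n = Real.log n + cc := by rw [hpc]; field_simp
  have hpl : pp ≤ Real.log n / n := by
    rw [hpc]
    gcongr <;> linarith
  have hp2 : pp ≤ 1 / 2 := hpl.trans hl1
  set q : ℝ := 1 - pp with hqdef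
  have hq0 : 0 < q := by simp only [hqdef]; linarith
  have hqhalf : 1 / 2 ≤ q := by simp only [hqdef]; linarith
  set A : ℝ := q ^ (n - 1) with hAdef
  set E : ℝ := (n : ℝ) * A with hEdef
  have hA0 : 0 < A := pow_pos hq0 _
  have hE0 : 0 < E := mul_pos hn' hA0
  set LE : ℝ := Real.exp (-cc - 1) with hLEdef
  have hLE0 : 0 < LE := Real.exp_pos _
  -- lower bound on E
  have hlogq : -pp - 2 * pp ^ 2 ≤ Real.log q := by
    have h2 : Real.log q⁻¹ ≤ q⁻¹ - 1 := Real.log_le_sub_one_of_pos (by positivity)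
    rw [Real.log_inv] at h2
    have h3 : q⁻¹ - 1 = pp / q := by field_simp [hqdef]; linarith
    have h4 : pp / q ≤ pp + 2 * pp ^ 2 := by
      rw [div_le_iff₀ hq0]
      nlinarith
    linarith
  have hplog : pp * Real.log n ≤ 1 / 4 := by
    have : pp * Real.log n ≤ (Real.log n / n) * Real.log n := by
      apply mul_le_mul_of_nonneg_right hpl hlogn
    calc pp * Real.log n ≤ (Real.log n / n) * Real.log n := this
      _ = (Real.log n) ^ 2 / n := by ring
      _ ≤ 1 / 4 := hl2
  have hcast : ((n - 1 : ℕ) : ℝ) = (n : ℝ) - 1 := by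
    rw [Nat.cast_sub (by omega)]; simp
  have hElow : LE ≤ E := by
    have hqexp : A = Real.exp (((n - 1 : ℕ) : ℝ) * Real.log q) := by
      rw [Real.exp_nat_mul, Real.exp_log hq0]
    have hexps : E = Real.exp (Real.log n + ((n - 1 : ℕ) : ℝ) * Real.log q) := by
      rw [Real.exp_add, Real.exp_log hn', ← hqexp, hEdef]
    rw [hexps, hLEdef]
    apply Real.exp_le_exp.mpr
    rw [hcast]
    have hlogq_np : -(Real.log n) - cc - 1 ≤ ((n : ℝ) - 1) * Real.log q := by
      have e1 : ((n : ℝ) - 1) * Real.log q ≥ ((n : ℝ) - 1) * (-pp - 2 * pp ^ 2) := by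
        apply mul_le_mul_of_nonneg_left hlogq (by linarith)
      have e2 : ((n : ℝ) - 1) * (-pp - 2 * pp ^ 2) ≥ (n : ℝ) * (-pp - 2 * pp ^ 2) := by
        nlinarith
      have e3 : (n : ℝ) * (-pp - 2 * pp ^ 2) = -(pp * n) - 2 * pp * (pp * n) := by ring
      rw [hpn] at e3
      -- -(log n + cc) - 2 pp (log n + cc) ≥ -log n - cc - 2 pp log n ≥ -log n - cc - 1
      have e4 : -(Real.log n + cc) - 2 * pp * (Real.log n + cc)
          ≥ -(Real.log n) - cc - 1 := by nlinarith
      linarith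
    linarith
  -- variance bound
  have hBq : q ^ (2 * n - 3) * q = A ^ 2 := by
    rw [hAdef, ← pow_succ, ← pow_mul]
    congr 1
    omega
  have hVar : ProbabilityTheory.variance (Xre n) (erMeasure n pp) ≤ E + 2 * pp * E ^ 2 := by
    rw [variance_Xre h0.le h1.le]
    have h5 : (n : ℝ) * ((n - 1 : ℕ) : ℝ) * q ^ (2 * n - 3) ≤ (n : ℝ) ^ 2 * q ^ (2 * n - 3) := by
      have : ((n - 1 : ℕ) : ℝ) ≤ (n : ℝ) := by rw [hcast]; linarith
      have hq3 : (0 : ℝ) ≤ q ^ (2 * n - 3) := by positivity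
      have h5a : (n : ℝ) * ((n - 1 : ℕ) : ℝ) ≤ (n : ℝ) * (n : ℝ) :=
        mul_le_mul_of_nonneg_left this hn'.le
      nlinarith [mul_le_mul_of_nonneg_right h5a hq3]
    have h6 : (n : ℝ) ^ 2 * q ^ (2 * n - 3) = E ^ 2 / q := by
      rw [eq_div_iff hq0.ne']
      calc (n : ℝ) ^ 2 * q ^ (2 * n - 3) * q = (n : ℝ) ^ 2 * (q ^ (2 * n - 3) * q) := by ring
        _ = (n : ℝ) ^ 2 * A ^ 2 := by rw [hBq]
        _ = E ^ 2 := by rw [hEdef]; ring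
    have h7 : E ^ 2 / q - E ^ 2 ≤ 2 * pp * E ^ 2 := by
      have : E ^ 2 / q - E ^ 2 = E ^ 2 * (pp / q) := by
        field_simp [hqdef]
        ring
      rw [this]
      have hpq : pp / q ≤ 2 * pp := by
        rw [div_le_iff₀ hq0]
        nlinarith
      nlinarith [sq_nonneg E]
    calc E + (n : ℝ) * ((n - 1 : ℕ) : ℝ) * q ^ (2 * n - 3) - E ^ 2
        ≤ E + (n : ℝ) ^ 2 * q ^ (2 * n - 3) - E ^ 2 := by linarith
      _ = E + (E ^ 2 / q - E ^ 2) := by rw [h6]; ring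
      _ ≤ E + 2 * pp * E ^ 2 := by linarith
  -- Chebyshev
  have hEint : ∫ ω, Xre n ω ∂(erMeasure n pp) = E := integral_Xre h0.le h1.le
  have hME : (M : ℝ) ≤ E / 2 := by
    have : 2 * (M : ℝ) ≤ E := hMe.trans hElow
    linarith
  have hsub : {ω : EdgeIdx n → Bool | isolatedCount n ω ≤ M} ⊆
      {ω | E / 2 ≤ |Xre n ω - ∫ x, Xre n x ∂(erMeasure n pp)|} := by
    intro ω hω
    simp only [Set.mem_setOf_eq] at hω ⊢
    rw [hEint]
    have hXle : Xre n ω ≤ (M : ℝ) := by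
      rw [Xre]; exact_mod_cast hω
    have : E / 2 ≤ E - Xre n ω := by linarith
    calc E / 2 ≤ E - Xre n ω := this
      _ ≤ |E - Xre n ω| := le_abs_self _
      _ = |Xre n ω - E| := abs_sub_comm _ _
  have hcheb := ProbabilityTheory.meas_ge_le_variance_div_sq
    (X := Xre n) (μ := erMeasure n pp) MemLp.of_discrete (c := E / 2) (by linarith)
  have hbnd : ProbabilityTheory.variance (Xre n) (erMeasure n pp) / (E / 2) ^ 2
      ≤ 4 / LE + 8 * (Real.log n / n) := by
    have hstep : ProbabilityTheory.variance (Xre n) (erMeasure n pp) / (E / 2) ^ 2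
        ≤ (E + 2 * pp * E ^ 2) / (E / 2) ^ 2 := by
      gcongr
    have heq : (E + 2 * pp * E ^ 2) / (E / 2) ^ 2 = 4 / E + 8 * pp := by
      field_simp
      ring
    have h4E : 4 / E ≤ 4 / LE := by gcongr
    have h8p : 8 * pp ≤ 8 * (Real.log n / n) := by linarith
    calc ProbabilityTheory.variance (Xre n) (erMeasure n pp) / (E / 2) ^ 2
        ≤ (E + 2 * pp * E ^ 2) / (E / 2) ^ 2 := hstep
      _ = 4 / E + 8 * pp := heq
      _ ≤ 4 / LE + 8 * (Real.log n / n) := by linarith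
  have hmeasle : erMeasure n pp {ω | isolatedCount n ω ≤ M}
      ≤ ENNReal.ofReal (4 / LE + 8 * (Real.log n / n)) :=
    le_trans (le_trans (measure_mono hsub) hcheb) (ENNReal.ofReal_le_ofReal hbnd)
  have hcompl : {ω : EdgeIdx n → Bool | M < isolatedCount n ω} =
      {ω | isolatedCount n ω ≤ M}ᶜ := by
    ext ω; simp [not_le]
  have hmeas : erMeasure n pp {ω | M < isolatedCount n ω}
      = 1 - erMeasure n pp {ω | isolatedCount n ω ≤ M} := by
    rw [hcompl, prob_compl_eq_one_sub MeasurableSet.of_discrete]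
  have hle1 : erMeasure n pp {ω | isolatedCount n ω ≤ M} ≤ 1 := prob_le_one
  constructor
  · rw [hmeas, ENNReal.toReal_sub_of_le hle1 ENNReal.one_ne_top, ENNReal.toReal_one]
    have hB0 : (0 : ℝ) ≤ 4 / LE + 8 * (Real.log n / n) := by positivity
    have := ENNReal.toReal_mono ENNReal.ofReal_ne_top hmeasle
    rw [ENNReal.toReal_ofReal hB0] at this
    linarith
  · have := ENNReal.toReal_mono ENNReal.one_ne_top
      (prob_le_one (μ := erMeasure n pp) (s := {ω | M < isolatedCount n ω}))
    simpa using this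

lemma part_two (p c : ℕ → ℝ)
    (hp : ∀ n : ℕ, 1 ≤ n → p n = (Real.log n + c n) / n ∧ 0 < p n ∧ p n < 1)
    (hc : Tendsto c atTop atBot) (M : ℕ) (hM : 1 ≤ M) :
    Tendsto (fun n : ℕ => (erMeasure n (p n) {ω | M < isolatedCount n ω}).toReal)
      atTop (nhds 1) := by
  have hneg : Tendsto (fun n : ℕ => -c n - 1) atTop atTop := by
    apply tendsto_atTop_add_const_right
    exact tendsto_neg_atTop_iff.mpr hc
  have hexp : Tendsto (fun n : ℕ => Real.exp (-c n - 1)) atTop atTop :=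
    Real.tendsto_exp_atTop.comp hneg
  have hlog1 : Tendsto (fun n : ℕ => Real.log n / n) atTop (nhds 0) := by
    have h := (Real.tendsto_pow_log_div_mul_add_atTop 1 0 1 one_ne_zero).comp
      (tendsto_natCast_atTop_atTop (R := ℝ))
    simpa [Function.comp_def] using h
  have hlog2 : Tendsto (fun n : ℕ => (Real.log n) ^ 2 / n) atTop (nhds 0) := by
    have h := (Real.tendsto_pow_log_div_mul_add_atTop 1 0 2 one_ne_zero).comp
      (tendsto_natCast_atTop_atTop (R := ℝ))
    simpa [Function.comp_def] using h
  have hbnd0 : Tendsto (fun n : ℕ => 4 / Real.exp (-c n - 1) + 8 * (Real.log n / n))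
      atTop (nhds 0) := by
    have h1 : Tendsto (fun n : ℕ => 4 / Real.exp (-c n - 1)) atTop (nhds 0) := by
      have := hexp.inv_tendsto_atTop
      have h2 := this.const_mul (4 : ℝ)
      simpa [div_eq_mul_inv] using h2
    have h2 : Tendsto (fun n : ℕ => 8 * (Real.log n / n)) atTop (nhds 0) := by
      have := hlog1.const_mul (8 : ℝ)
      simpa using this
    have := h1.add h2
    simpa using this
  have hlim : Tendsto (fun n : ℕ => 1 - (4 / Real.exp (-c n - 1) + 8 * (Real.log n / n)))
      atTop (nhds 1) := by
    have := (tendsto_const_nhds (x := (1 : ℝ)) (f := atTop (α := ℕ))).sub hbnd0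
    simpa using this
  refine tendsto_of_tendsto_of_tendsto_of_le_of_le' hlim tendsto_const_nhds ?_ ?_
  · filter_upwards [eventually_ge_atTop 2, hc.eventually_le_atBot 0,
      hlog2.eventually_le_const (by norm_num : (0:ℝ) < 1/4),
      hlog1.eventually_le_const (by norm_num : (0:ℝ) < 1/2),
      hexp.eventually_ge_atTop (2 * (M : ℝ))] with n hn hcn hl2 hl1 hMe
    obtain ⟨hpn, hp0, hp1⟩ := hp n (by omega)
    exact (key_two hn hM hpn hp0 hp1 hcn hl2 hl1 hMe).1
  · filter_upwards [eventually_ge_atTop 2, hc.eventually_le_atBot 0,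
      hlog2.eventually_le_const (by norm_num : (0:ℝ) < 1/4),
      hlog1.eventually_le_const (by norm_num : (0:ℝ) < 1/2),
      hexp.eventually_ge_atTop (2 * (M : ℝ))] with n hn hcn hl2 hl1 hMe
    obtain ⟨hpn, hp0, hp1⟩ := hp n (by omega)
    exact (key_two hn hM hpn hp0 hp1 hcn hl2 hl1 hMe).2

end PartTwo

/-- Threshold for isolated vertices in the Erdős–Rényi graph `G(n, pₙ)` with
`pₙ = (log n + cₙ)/n` and `0 < pₙ < 1`:
(i) if `cₙ → ∞` then `Pₙ(Dₙ = 0) → 1`;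
(ii) if `cₙ → −∞` then `Pₙ(Dₙ > M) → 1` for every positive integer `M`. -/
theorem er_isolated_vertices_threshold (p c : ℕ → ℝ)
    (hp : ∀ n : ℕ, 1 ≤ n → p n = (Real.log n + c n) / n ∧ 0 < p n ∧ p n < 1) :
    (Tendsto c atTop atTop →
      Tendsto (fun n : ℕ => (erMeasure n (p n) {ω | isolatedCount n ω = 0}).toReal)
        atTop (nhds 1)) ∧
    (Tendsto c atTop atBot →
      ∀ M : ℕ, 1 ≤ M →
        Tendsto (fun n : ℕ => (erMeasure n (p n) {ω | M < isolatedCount n ω}).toReal)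
          atTop (nhds 1)) :=
  ⟨fun hc => part_one p c hp hc, fun hc M hM => part_two p c hp hc M hM⟩
end

section
/- Distribution of the location of the first maximum of a symmetric random walk: let {X_j}_{j≥1} be i.i.d. real random variables whose common distribution μ is symmetric (μ(−B) = μ(B) for every Borel set B) and continuous (μ({x}) = 0 for every x ∈ ℝ), let S_0 = 0 and S_n = X_1 + ... + X_n, and let L_n be the smallest index j ∈ {0,1,...,n} at which S_j = max(S_0, S_1, ..., S_n). Then for every n ≥ 1 and every k ∈ {0,1,...,n}, P( L_n = k ) = binom(2k, k) · binom(2n−2k, n−k) / 2^{2n}. -/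
open MeasureTheory ProbabilityTheory


open MeasureTheory ProbabilityTheory Finset

noncomputable section

def SApsum {m : ℕ} (v : Fin m → ℝ) (j : ℕ) : ℝ :=
  ∑ l : Fin m, if (l : ℕ) < j then v l else 0

lemma SApsum_comp {m : ℕ} (g : ℕ → ℝ) {j : ℕ} (hj : j ≤ m) :
    SApsum (fun i : Fin m => g (i : ℕ)) j = ∑ l ∈ Finset.range j, g l := by
  unfold SApsum
  rw [Fin.sum_univ_eq_sum_range (fun l : ℕ => if l < j then g l else 0) m, ← Finset.sum_filter]
  congr 1
  ext l
  simp only [Finset.mem_filter, Finset.mem_range]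
  omega

lemma SApsum_meas {m j : ℕ} : Measurable fun v : Fin m → ℝ => SApsum v j := by
  unfold SApsum
  refine Finset.measurable_sum _ fun l _ => ?_
  by_cases h : (l : ℕ) < j
  · simpa [h] using (measurable_pi_apply l : Measurable fun v : Fin m → ℝ => v l)
  · simp [h]

lemma SApsum_neg {m : ℕ} (v : Fin m → ℝ) (j : ℕ) :
    SApsum (fun i => -(v i)) j = -SApsum v j := by
  unfold SApsum
  rw [← Finset.sum_neg_distrib]
  refine Finset.sum_congr rfl fun l _ => ?_
  split <;> simp

def SAposE (m : ℕ) : Set (Fin m → ℝ) := {v | ∀ j, 1 ≤ j → j ≤ m → 0 < SApsum v j}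
def SAnonposE (m : ℕ) : Set (Fin m → ℝ) := {v | ∀ j, 1 ≤ j → j ≤ m → SApsum v j ≤ 0}
def SAnonnegE (m : ℕ) : Set (Fin m → ℝ) := {v | ∀ j, 1 ≤ j → j ≤ m → 0 ≤ SApsum v j}

lemma SAposE_meas (m : ℕ) : MeasurableSet (SAposE m) := by
  have : SAposE m = ⋂ (j : ℕ) (_ : 1 ≤ j) (_ : j ≤ m), {v : Fin m → ℝ | 0 < SApsum v j} := by
    ext v; simp [SAposE]
  rw [this]
  exact MeasurableSet.iInter fun j => MeasurableSet.iInter fun _ => MeasurableSet.iInter fun _ =>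
    measurableSet_lt measurable_const SApsum_meas

lemma SAnonposE_meas (m : ℕ) : MeasurableSet (SAnonposE m) := by
  have : SAnonposE m = ⋂ (j : ℕ) (_ : 1 ≤ j) (_ : j ≤ m), {v : Fin m → ℝ | SApsum v j ≤ 0} := by
    ext v; simp [SAnonposE]
  rw [this]
  exact MeasurableSet.iInter fun j => MeasurableSet.iInter fun _ => MeasurableSet.iInter fun _ =>
    measurableSet_le SApsum_meas measurable_const

lemma SAnonnegE_meas (m : ℕ) : MeasurableSet (SAnonnegE m) := by
  have : SAnonnegE m = ⋂ (j : ℕ) (_ : 1 ≤ j) (_ : j ≤ m), {v : Fin m → ℝ | 0 ≤ SApsum v j} := by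
    ext v; simp [SAnonnegE]
  rw [this]
  exact MeasurableSet.iInter fun j => MeasurableSet.iInter fun _ => MeasurableSet.iInter fun _ =>
    measurableSet_le measurable_const SApsum_meas

-- joint law of any injective subfamily is the product measure
lemma SA_law {Ω : Type*} [MeasurableSpace Ω] (P : Measure Ω) [IsProbabilityMeasure P]
    (μ : Measure ℝ) [IsProbabilityMeasure μ] (X : ℕ → Ω → ℝ)
    (hmeas : ∀ j, Measurable (X j)) (hdist : ∀ j, Measure.map (X j) P = μ)
    (hind : iIndepFun X P)
    {m : ℕ} (f : Fin m → ℕ) (hf : Function.Injective f) :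
    Measure.map (fun ω (i : Fin m) => X (f i) ω) P = Measure.pi (fun _ => μ) := by
  classical
  have hXm : Measurable fun ω (i : Fin m) => X (f i) ω :=
    measurable_pi_lambda _ fun i => hmeas (f i)
  refine (Measure.pi_eq fun s hs => ?_).symm
  rw [Measure.map_apply hXm (MeasurableSet.univ_pi hs)]
  set T : Finset ℕ := Finset.image f Finset.univ with hT
  set sets : ℕ → Set ℝ := fun jn => if h : ∃ i, f i = jn then s h.choose else Set.univ
    with hsets
  have hsets_f : ∀ i, sets (f i) = s i := by
    intro i
    have hex : ∃ i', f i' = f i := ⟨i, rfl⟩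
    simp only [hsets, dif_pos hex]
    exact congrArg s (hf hex.choose_spec)
  have hsets_meas : ∀ jn, MeasurableSet (sets jn) := by
    intro jn
    simp only [hsets]
    split
    · exact hs _
    · exact MeasurableSet.univ
  have hpre : (fun ω (i : Fin m) => X (f i) ω) ⁻¹' Set.pi Set.univ s
      = ⋂ jn ∈ T, X jn ⁻¹' sets jn := by
    ext ω
    simp only [Set.mem_preimage, Set.mem_pi, Set.mem_univ, forall_true_left, Set.mem_iInter,
      hT, Finset.mem_image, Finset.mem_univ, true_and]
    constructor
    · rintro h jn ⟨i, rfl⟩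
      rw [hsets_f]; exact h i
    · intro h i
      have := h (f i) ⟨i, rfl⟩
      rwa [hsets_f] at this
  rw [hpre, hind.measure_inter_preimage_eq_mul T (sets := sets) (fun jn _ => hsets_meas jn),
    Finset.prod_image (fun a _ b _ h => hf h)]
  refine Finset.prod_congr rfl fun i _ => ?_
  rw [hsets_f, ← hdist (f i), Measure.map_apply (hmeas (f i)) (hs i)]

lemma SA_negInv (μ : Measure ℝ) [IsProbabilityMeasure μ]
    (hsym : ∀ B : Set ℝ, MeasurableSet B → μ ((fun x => -x) ⁻¹' B) = μ B) (m : ℕ) :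
    Measure.map (fun v : Fin m → ℝ => fun i => -(v i)) (Measure.pi fun _ => μ)
      = Measure.pi (fun _ => μ) := by
  have hnegm : Measurable fun v : Fin m → ℝ => fun i => -(v i) :=
    measurable_pi_lambda _ fun i => (measurable_pi_apply i).neg
  refine (Measure.pi_eq fun s hs => ?_).symm
  rw [Measure.map_apply hnegm (MeasurableSet.univ_pi hs)]
  have hpre : (fun v : Fin m → ℝ => fun i => -(v i)) ⁻¹' Set.pi Set.univ s
      = Set.pi Set.univ (fun i => (fun x : ℝ => -x) ⁻¹' s i) := by
    ext v; simp [Set.mem_pi]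
  rw [hpre, Measure.pi_pi]
  exact Finset.prod_congr rfl fun i _ => hsym (s i) (hs i)
end

lemma SA_reflect (c : ℕ → ℝ) (n : ℕ) :
    2 * ∑ k ∈ Finset.range (n+1), (k : ℝ) * c k * c (n-k)
      = n * ∑ k ∈ Finset.range (n+1), c k * c (n-k) := by
  have h := Finset.sum_range_reflect (fun k : ℕ => (k : ℝ) * c k * c (n-k)) (n+1)
  have h2 : ∑ j ∈ Finset.range (n+1), (fun k : ℕ => (k : ℝ) * c k * c (n-k)) (n + 1 - 1 - j)
      = ∑ j ∈ Finset.range (n+1), ((n - j : ℕ) : ℝ) * c (n-j) * c j := by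
    refine Finset.sum_congr rfl fun j hj => ?_
    have hj' : j ≤ n := by simpa [Nat.lt_succ_iff] using hj
    simp only
    have e1 : n + 1 - 1 - j = n - j := by omega
    rw [e1]
    have e2 : n - (n - j) = j := by omega
    rw [e2]
  rw [h2] at h
  have key : ∑ k ∈ Finset.range (n+1), ((k : ℝ) + ((n - k : ℕ) : ℝ)) * (c k * c (n-k))
      = ∑ k ∈ Finset.range (n+1), (n : ℝ) * (c k * c (n-k)) := by
    refine Finset.sum_congr rfl fun k hk => ?_
    have hk' : k ≤ n := by simpa [Nat.lt_succ_iff] using hk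
    rw [Nat.cast_sub hk']; ring_nf
  calc 2 * ∑ k ∈ Finset.range (n+1), (k : ℝ) * c k * c (n-k)
      = (∑ k ∈ Finset.range (n+1), (k : ℝ) * c k * c (n-k))
        + ∑ j ∈ Finset.range (n+1), ((n - j : ℕ) : ℝ) * c (n-j) * c j := by rw [h]; ring
    _ = ∑ k ∈ Finset.range (n+1), ((k : ℝ) + ((n - k : ℕ) : ℝ)) * (c k * c (n-k)) := by
        rw [← Finset.sum_add_distrib]
        refine Finset.sum_congr rfl fun k _ => ?_; ring
    _ = ∑ k ∈ Finset.range (n+1), (n : ℝ) * (c k * c (n-k)) := key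
    _ = n * ∑ k ∈ Finset.range (n+1), c k * c (n-k) := by rw [Finset.mul_sum]

lemma SA_central_conv (n : ℕ) :
    ∑ k ∈ Finset.range (n+1), ((Nat.centralBinom k : ℝ) * (Nat.centralBinom (n-k) : ℝ)) = 4 ^ n := by
  set c : ℕ → ℝ := fun m => (Nat.centralBinom m : ℝ) with hc
  induction n with
  | zero => simp [hc, Nat.centralBinom]
  | succ n ih =>
    have key1 : ∀ m : ℕ, ((m : ℝ) + 1) * c (m+1) = 2 * (2 * m + 1) * c m := by
      intro m
      have h2 := congrArg (fun x : ℕ => (x : ℝ)) (Nat.succ_mul_centralBinom_succ m)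
      push_cast at h2
      simpa [hc] using h2
    have hrefl1 := SA_reflect c (n+1)
    have hrefl0 := SA_reflect c n
    have hA : ∑ k ∈ Finset.range (n+2), (k : ℝ) * c k * c (n+1-k)
        = 4 * (∑ j ∈ Finset.range (n+1), (j : ℝ) * c j * c (n-j))
          + 2 * ∑ j ∈ Finset.range (n+1), c j * c (n-j) := by
      rw [Finset.sum_range_succ' (fun k : ℕ => (k : ℝ) * c k * c (n+1-k)) (n+1)]
      simp only [Nat.cast_zero, zero_mul, add_zero]
      calc ∑ j ∈ Finset.range (n+1), ((j + 1 : ℕ) : ℝ) * c (j+1) * c (n+1-(j+1))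
          = ∑ j ∈ Finset.range (n+1), (4 * ((j:ℝ) * c j * c (n-j)) + 2 * (c j * c (n-j))) := by
            refine Finset.sum_congr rfl fun j _ => ?_
            have e : n + 1 - (j + 1) = n - j := by omega
            rw [e]
            have hk := key1 j
            push_cast
            calc ((j : ℝ) + 1) * c (j+1) * c (n-j) = (((j:ℝ)+1) * c (j+1)) * c (n-j) := by ring
              _ = (2 * (2 * j + 1) * c j) * c (n-j) := by rw [hk]
              _ = 4 * ((j:ℝ) * c j * c (n-j)) + 2 * (c j * c (n-j)) := by ring
        _ = 4 * (∑ j ∈ Finset.range (n+1), (j : ℝ) * c j * c (n-j))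
          + 2 * ∑ j ∈ Finset.range (n+1), c j * c (n-j) := by
            rw [Finset.sum_add_distrib, ← Finset.mul_sum, ← Finset.mul_sum]
    have hcast : (((n+1 : ℕ)) : ℝ) = (n : ℝ) + 1 := by push_cast; ring
    rw [hcast] at hrefl1
    have hmain : ((n:ℝ)+1) * ∑ k ∈ Finset.range (n+2), c k * c (n+1-k)
        = ((n:ℝ)+1) * (4 ^ (n+1)) := by
      calc ((n:ℝ)+1) * ∑ k ∈ Finset.range (n+2), c k * c (n+1-k)
          = 2 * ∑ k ∈ Finset.range (n+2), (k : ℝ) * c k * c (n+1-k) := hrefl1.symm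
        _ = 2 * (4 * (∑ j ∈ Finset.range (n+1), (j : ℝ) * c j * c (n-j))
              + 2 * ∑ j ∈ Finset.range (n+1), c j * c (n-j)) := by rw [hA]
        _ = 4 * (2 * ∑ j ∈ Finset.range (n+1), (j : ℝ) * c j * c (n-j))
              + 4 * ∑ j ∈ Finset.range (n+1), c j * c (n-j) := by ring
        _ = 4 * ((n:ℝ) * ∑ j ∈ Finset.range (n+1), c j * c (n-j))
              + 4 * ∑ j ∈ Finset.range (n+1), c j * c (n-j) := by rw [hrefl0]
        _ = ((n:ℝ) + 1) * (4 * ∑ j ∈ Finset.range (n+1), c j * c (n-j)) := by ring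
        _ = ((n:ℝ)+1) * (4 ^ (n+1)) := by rw [ih]; ring
    have hne : ((n:ℝ)+1) ≠ 0 := by positivity
    exact mul_left_cancel₀ hne hmain

lemma SA_aconv (n : ℕ) :
    ∑ k ∈ Finset.range (n+1),
      ((Nat.centralBinom k : ℝ) / 4 ^ k) * ((Nat.centralBinom (n-k) : ℝ) / 4 ^ (n-k)) = 1 := by
  have h : ∀ k ∈ Finset.range (n+1),
      ((Nat.centralBinom k : ℝ) / 4 ^ k) * ((Nat.centralBinom (n-k) : ℝ) / 4 ^ (n-k))
        = ((Nat.centralBinom k : ℝ) * (Nat.centralBinom (n-k) : ℝ)) / 4 ^ n := by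
    intro k hk
    have hk' : k ≤ n := by simpa [Nat.lt_succ_iff] using hk
    rw [div_mul_div_comm, ← pow_add]
    congr 2
    omega
  rw [Finset.sum_congr rfl h, ← Finset.sum_div, SA_central_conv]
  field_simp

lemma SA_unique (F : ℕ → ℝ) (hF0 : F 0 = 1)
    (hconv : ∀ n, ∑ k ∈ Finset.range (n+1), F k * F (n-k) = 1) (m : ℕ) :
    F m = (Nat.centralBinom m : ℝ) / 4 ^ m := by
  induction m using Nat.strong_induction_on with
  | _ m ih =>
    match m with
    | 0 => simpa [Nat.centralBinom] using hF0
    | (n+1) =>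
      set a : ℕ → ℝ := fun m => (Nat.centralBinom m : ℝ) / 4 ^ m with ha
      have ha0 : a 0 = 1 := by simp [ha, Nat.centralBinom]
      have expand : ∀ G : ℕ → ℝ, G 0 = 1 →
          ∑ k ∈ Finset.range (n+2), G k * G (n+1-k)
            = (∑ j ∈ Finset.range n, G (j+1) * G (n-j)) + G (n+1) + G (n+1) := by
        intro G hG0
        rw [Finset.sum_range_succ]
        have e1 : n + 1 - (n+1) = 0 := by omega
        rw [e1, hG0, mul_one]
        congr 1
        rw [Finset.sum_range_succ' (fun k : ℕ => G k * G (n+1-k)) n]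
        have e2 : n + 1 - 0 = n + 1 := by omega
        rw [e2, hG0, one_mul]
        congr 1
        refine Finset.sum_congr rfl fun j _ => ?_
        have e3 : n + 1 - (j+1) = n - j := by omega
        rw [e3]
      have hFe := expand F hF0
      have hae := expand a ha0
      have hmid : ∑ j ∈ Finset.range n, F (j+1) * F (n-j)
          = ∑ j ∈ Finset.range n, a (j+1) * a (n-j) := by
        refine Finset.sum_congr rfl fun j hj => ?_
        have hj' : j < n := Finset.mem_range.mp hj
        rw [ih (j+1) (by omega), ih (n-j) (by omega)]
      have h1 : (∑ j ∈ Finset.range n, F (j+1) * F (n-j)) + F (n+1) + F (n+1) = 1 := by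
        rw [← hFe]; exact hconv (n+1)
      have h2 : (∑ j ∈ Finset.range n, a (j+1) * a (n-j)) + a (n+1) + a (n+1) = 1 := by
        rw [← hae]
        have := SA_aconv (n+1)
        simpa [ha] using this
      rw [hmid] at h1
      have : F (n+1) = a (n+1) := by linarith
      simpa [ha] using this

open MeasureTheory ProbabilityTheory

/-- Distribution of the location of the first maximum of a symmetric random walk: for
i.i.d. steps with symmetric continuous common distribution `μ` and partial sums
`Sⱼ = X₀ + ⋯ + X_{j-1}` (so `S₀ = 0`), the least index `k ∈ {0,…,n}` at which
`S_k = max(S₀,…,Sₙ)` (equivalently: `Sᵢ ≤ S_k` for all `i ≤ n` and `Sᵢ < S_k` for all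
`i < k`) satisfies `P(Lₙ = k) = C(2k,k) C(2n-2k,n-k) / 2^{2n}`. -/
theorem sparre_andersen_first_maximum {Ω : Type*} [MeasurableSpace Ω] (P : Measure Ω)
    [IsProbabilityMeasure P] (μ : Measure ℝ) [IsProbabilityMeasure μ]
    (hsym : ∀ B : Set ℝ, MeasurableSet B → μ ((fun x => -x) ⁻¹' B) = μ B)
    (hcont : ∀ x : ℝ, μ {x} = 0)
    (X : ℕ → Ω → ℝ)
    (hmeas : ∀ j, Measurable (X j))
    (hdist : ∀ j, Measure.map (X j) P = μ)
    (hind : iIndepFun X P)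
    (n k : ℕ) (hn : 1 ≤ n) (hk : k ≤ n) :
    (P {ω | (∀ i ≤ n, ∑ l ∈ Finset.range i, X l ω ≤ ∑ l ∈ Finset.range k, X l ω) ∧
        (∀ i < k, ∑ l ∈ Finset.range i, X l ω < ∑ l ∈ Finset.range k, X l ω)}).toReal =
      ((2 * k).choose k : ℝ) * ((2 * n - 2 * k).choose (n - k) : ℝ) / 2 ^ (2 * n) := by
  classical
  have hSmeas : ∀ i : ℕ, Measurable (fun ω => ∑ l ∈ Finset.range i, X l ω) :=
    fun i => Finset.measurable_sum _ fun l _ => hmeas l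
  have hXm : ∀ (m : ℕ) (f : Fin m → ℕ), Measurable fun ω (i : Fin m) => X (f i) ω :=
    fun m f => measurable_pi_lambda _ fun i => hmeas (f i)
  have lawApp : ∀ (m : ℕ) (f : Fin m → ℕ), Function.Injective f →
      ∀ E : Set (Fin m → ℝ), MeasurableSet E →
      P ((fun ω (i : Fin m) => X (f i) ω) ⁻¹' E) = Measure.pi (fun _ : Fin m => μ) E := by
    intro m f hf E hE
    rw [← SA_law P μ X hmeas hdist hind f hf, Measure.map_apply (hXm m f) hE]
  set pp : ℕ → ENNReal := fun m => Measure.pi (fun _ : Fin m => μ) (SAposE m) with hppdef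
  set qq : ℕ → ENNReal := fun m => Measure.pi (fun _ : Fin m => μ) (SAnonposE m) with hqqdef
  -- partial sum identities
  have hsum_shift : ∀ (ω : Ω) (K j : ℕ), ∑ l ∈ Finset.range j, X (K + l) ω
      = ∑ l ∈ Finset.range (K + j), X l ω - ∑ l ∈ Finset.range K, X l ω := by
    intro ω K j
    have h1 : ∑ l ∈ Finset.range (K + j), X l ω
        = (∑ l ∈ Finset.Ico 0 K, X l ω) + ∑ l ∈ Finset.Ico K (K + j), X l ω := by
      rw [Finset.range_eq_Ico, ← Finset.sum_Ico_consecutive _ (Nat.zero_le K) (Nat.le_add_right K j)]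
    have h2 : ∑ l ∈ Finset.Ico K (K + j), X l ω = ∑ l ∈ Finset.range j, X (K + l) ω := by
      rw [Finset.sum_Ico_eq_sum_range]
      simp
    have h0 : ∑ l ∈ Finset.Ico 0 K, X l ω = ∑ l ∈ Finset.range K, X l ω := by
      rw [Finset.range_eq_Ico]
    rw [h2, h0] at h1
    linarith [h1]
  have hsum_rev : ∀ (ω : Ω) (K j : ℕ), j ≤ K → ∑ l ∈ Finset.range j, X (K - 1 - l) ω
      = ∑ l ∈ Finset.range K, X l ω - ∑ l ∈ Finset.range (K - j), X l ω := by
    intro ω K j hj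
    have h1 : ∑ l ∈ Finset.range j, X (K - 1 - l) ω
        = ∑ l ∈ Finset.range j, X ((K - j) + l) ω := by
      rw [← Finset.sum_range_reflect (fun l => X ((K - j) + l) ω) j]
      refine Finset.sum_congr rfl fun l hl => ?_
      have hl' := Finset.mem_range.mp hl
      congr 1
      omega
    rw [h1, hsum_shift ω (K - j) j]
    have e : K - j + j = K := by omega
    rw [e]
  -- the main splitting identity
  have hPA : ∀ (N K : ℕ), K ≤ N →
      P {ω | (∀ i ≤ N, ∑ l ∈ Finset.range i, X l ω ≤ ∑ l ∈ Finset.range K, X l ω) ∧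
          (∀ i < K, ∑ l ∈ Finset.range i, X l ω < ∑ l ∈ Finset.range K, X l ω)}
        = pp K * qq (N - K) := by
    intro N K hKN
    have hf1 : Function.Injective (fun i : Fin K => K - 1 - (i : ℕ)) := by
      intro a b h
      have ha := a.isLt; have hb := b.isLt
      exact Fin.ext (by simp only at h; omega)
    have hf2 : Function.Injective (fun i : Fin (N - K) => K + (i : ℕ)) := by
      intro a b h
      exact Fin.ext (by simp only at h; omega)
    set B : Set Ω := (fun ω (i : Fin K) => X (K - 1 - (i : ℕ)) ω) ⁻¹' SAposE K with hBdef
    set C : Set Ω := (fun ω (i : Fin (N - K)) => X (K + (i : ℕ)) ω) ⁻¹' SAnonposE (N - K)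
      with hCdef
    have hBset : B = {ω | ∀ i < K, ∑ l ∈ Finset.range i, X l ω < ∑ l ∈ Finset.range K, X l ω} := by
      ext ω
      simp only [hBdef, Set.mem_preimage, SAposE, Set.mem_setOf_eq]
      constructor
      · intro h i hi
        have h1 := h (K - i) (by omega) (by omega)
        rw [SApsum_comp (fun l => X (K - 1 - l) ω) (by omega),
          hsum_rev ω K (K - i) (by omega)] at h1
        have e : K - (K - i) = i := by omega
        rw [e] at h1
        linarith
      · intro h j h1 h2
        rw [SApsum_comp (fun l => X (K - 1 - l) ω) h2, hsum_rev ω K j h2]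
        have := h (K - j) (by omega)
        linarith
    have hCset : C = {ω | ∀ i, K ≤ i → i ≤ N →
        ∑ l ∈ Finset.range i, X l ω ≤ ∑ l ∈ Finset.range K, X l ω} := by
      ext ω
      simp only [hCdef, Set.mem_preimage, SAnonposE, Set.mem_setOf_eq]
      constructor
      · intro h i hKi hiN
        rcases eq_or_lt_of_le hKi with rfl | hlt
        · exact le_refl _
        · have h1 := h (i - K) (by omega) (by omega)
          rw [SApsum_comp (fun l => X (K + l) ω) (by omega), hsum_shift ω K (i - K)] at h1
          have e : K + (i - K) = i := by omega
          rw [e] at h1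
          linarith
      · intro h j h1 h2
        rw [SApsum_comp (fun l => X (K + l) ω) h2, hsum_shift ω K j]
        have := h (K + j) (by omega) (by omega)
        linarith
    have hACap : {ω | (∀ i ≤ N, ∑ l ∈ Finset.range i, X l ω ≤ ∑ l ∈ Finset.range K, X l ω) ∧
          (∀ i < K, ∑ l ∈ Finset.range i, X l ω < ∑ l ∈ Finset.range K, X l ω)} = B ∩ C := by
      rw [hBset, hCset]
      ext ω
      simp only [Set.mem_setOf_eq, Set.mem_inter_iff]
      constructor
      · rintro ⟨hle, hlt⟩
        exact ⟨hlt, fun i _ hiN => hle i hiN⟩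
      · rintro ⟨hlt, hle⟩
        refine ⟨fun i hiN => ?_, hlt⟩
        rcases lt_or_ge i K with hiK | hiK
        · exact le_of_lt (hlt i hiK)
        · exact hle i hiK hiN
    have hPB : P B = pp K := by
      rw [hBdef, lawApp K _ hf1 _ (SAposE_meas K)]
    have hPC : P C = qq (N - K) := by
      rw [hCdef, lawApp (N - K) _ hf2 _ (SAnonposE_meas (N - K))]
    have hIndep : IndepFun (fun ω (i : Fin K) => X (K - 1 - (i : ℕ)) ω)
        (fun ω (i : Fin (N - K)) => X (K + (i : ℕ)) ω) P := by
      have hd : Disjoint (Finset.range K) (Finset.Ico K N) := by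
        rw [Finset.disjoint_left]
        intro x hx hx'
        simp only [Finset.mem_range] at hx
        simp only [Finset.mem_Ico] at hx'
        omega
      have h := hind.indepFun_finset (Finset.range K) (Finset.Ico K N) hd hmeas
      have hg1 : Measurable fun (w : ↥(Finset.range K) → ℝ) =>
          fun i : Fin K => w ⟨K - 1 - (i : ℕ), by
            have := i.isLt; exact Finset.mem_range.mpr (by omega)⟩ :=
        measurable_pi_lambda _ fun i => measurable_pi_apply _
      have hg2 : Measurable fun (w : ↥(Finset.Ico K N) → ℝ) =>
          fun i : Fin (N - K) => w ⟨K + (i : ℕ), by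
            have := i.isLt; exact Finset.mem_Ico.mpr (by omega)⟩ :=
        measurable_pi_lambda _ fun i => measurable_pi_apply _
      exact h.comp hg1 hg2
    have hmul := hIndep.measure_inter_preimage_eq_mul (SAposE K) (SAnonposE (N - K))
      (SAposE_meas K) (SAnonposE_meas (N - K))
    rw [hACap, show P (B ∩ C) = P B * P C from hmul, hPB, hPC]
  -- the partition identity
  have hpart : ∀ N : ℕ, ∑ K ∈ Finset.range (N + 1), pp K * qq (N - K) = 1 := by
    intro N
    set A : ℕ → Set Ω := fun K =>
      {ω | (∀ i ≤ N, ∑ l ∈ Finset.range i, X l ω ≤ ∑ l ∈ Finset.range K, X l ω) ∧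
          (∀ i < K, ∑ l ∈ Finset.range i, X l ω < ∑ l ∈ Finset.range K, X l ω)} with hAdef
    have hmeasA : ∀ K, MeasurableSet (A K) := by
      intro K
      have : A K = (⋂ (i : ℕ) (_ : i ≤ N),
            {ω | ∑ l ∈ Finset.range i, X l ω ≤ ∑ l ∈ Finset.range K, X l ω})
          ∩ ⋂ (i : ℕ) (_ : i < K),
            {ω | ∑ l ∈ Finset.range i, X l ω < ∑ l ∈ Finset.range K, X l ω} := by
        ext ω; simp [hAdef]
      rw [this]
      exact (MeasurableSet.iInter fun i => MeasurableSet.iInter fun _ =>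
          measurableSet_le (hSmeas i) (hSmeas K)).inter
        (MeasurableSet.iInter fun i => MeasurableSet.iInter fun _ =>
          measurableSet_lt (hSmeas i) (hSmeas K))
    have hkey : ∀ a b : ℕ, a < b → b ≤ N → Disjoint (A a) (A b) := by
      intro a b hab hbN
      rw [Set.disjoint_left]
      rintro ω ⟨hle, _⟩ ⟨_, hlt'⟩
      have h1 := hlt' a hab
      have h2 := hle b hbN
      linarith
    have hdisj : (↑(Finset.range (N + 1)) : Set ℕ).PairwiseDisjoint A := by
      intro a ha b hb hne
      simp only [Finset.coe_range, Set.mem_Iio] at ha hb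
      rcases lt_or_gt_of_ne hne with h | h
      · exact hkey a b h (by omega)
      · exact (hkey b a h (by omega)).symm
    have hcover : ⋃ K ∈ Finset.range (N + 1), A K = Set.univ := by
      ext ω
      simp only [Set.mem_iUnion, Set.mem_univ, iff_true, Finset.mem_range]
      have hex : ∃ K, K ≤ N ∧ ∀ i ≤ N,
          ∑ l ∈ Finset.range i, X l ω ≤ ∑ l ∈ Finset.range K, X l ω := by
        obtain ⟨K, hK, hmax⟩ := Finset.exists_max_image (Finset.range (N + 1))
          (fun i => ∑ l ∈ Finset.range i, X l ω) ⟨0, by simp⟩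
        refine ⟨K, by simpa [Nat.lt_succ_iff] using hK, fun i hi => hmax i ?_⟩
        simp [Nat.lt_succ_iff, hi]
      refine ⟨Nat.find hex, by have := (Nat.find_spec hex).1; omega, ?_, ?_⟩
      · exact (Nat.find_spec hex).2
      · intro i hi
        by_contra hcon
        push_neg at hcon
        have hiN : i ≤ N := le_trans (le_of_lt (lt_of_lt_of_le hi (Nat.find_spec hex).1)) le_rfl
        have : ∀ i' ≤ N, ∑ l ∈ Finset.range i', X l ω ≤ ∑ l ∈ Finset.range i, X l ω :=
          fun i' hi' => le_trans ((Nat.find_spec hex).2 i' hi') hcon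
        exact Nat.find_min hex hi ⟨hiN, this⟩
    calc ∑ K ∈ Finset.range (N + 1), pp K * qq (N - K)
        = ∑ K ∈ Finset.range (N + 1), P (A K) := by
          refine Finset.sum_congr rfl fun K hK => ?_
          rw [hAdef]
          exact (hPA N K (by simpa [Nat.lt_succ_iff] using hK)).symm
      _ = P (⋃ K ∈ Finset.range (N + 1), A K) :=
          (measure_biUnion_finset hdisj fun K _ => hmeasA K).symm
      _ = 1 := by rw [hcover]; exact measure_univ
  -- single partial sums have continuous distribution
  have hS0 : ∀ j : ℕ, 1 ≤ j → P {ω | ∑ l ∈ Finset.range j, X l ω = 0} = 0 := by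
    intro j hj
    obtain ⟨j', rfl⟩ : ∃ j', j = j' + 1 := ⟨j - 1, by omega⟩
    set s : Finset ℕ := Finset.Ico 1 (j' + 1) with hsdef
    set T : Ω → ℝ := fun ω => ∑ l ∈ s, X l ω with hTdef
    have hTmeas : Measurable T := Finset.measurable_sum _ fun l _ => hmeas l
    have hsplit : ∀ ω, ∑ l ∈ Finset.range (j' + 1), X l ω = X 0 ω + T ω := by
      intro ω
      rw [Finset.range_eq_Ico, Finset.sum_eq_sum_Ico_succ_bot (by omega)]
    have hind0T : IndepFun (X 0) T P := by
      have hd : Disjoint ({0} : Finset ℕ) s := by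
        rw [Finset.disjoint_left]
        intro x hx hx'
        simp only [Finset.mem_singleton] at hx
        simp only [hsdef, Finset.mem_Ico] at hx'
        omega
      have h := hind.indepFun_finset {0} s hd hmeas
      have hg1 : Measurable fun (w : ↥({0} : Finset ℕ) → ℝ) => w ⟨0, by simp⟩ :=
        measurable_pi_apply _
      have hg2 : Measurable fun (w : ↥(s : Finset ℕ) → ℝ) => ∑ i, w i :=
        Finset.measurable_sum _ fun i _ => measurable_pi_apply _
      have hcomp := h.comp hg1 hg2
      have e1 : ((fun (w : ↥({0} : Finset ℕ) → ℝ) => w ⟨0, by simp⟩) ∘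
          (fun a (i : ↥({0} : Finset ℕ)) => X i a)) = X 0 := rfl
      have e2 : ((fun (w : ↥(s : Finset ℕ) → ℝ) => ∑ i, w i) ∘
          (fun a (i : ↥(s : Finset ℕ)) => X i a)) = T := by
        funext a
        exact Finset.sum_coe_sort s (fun l => X l a)
      rwa [e1, e2] at hcomp
    haveI : IsProbabilityMeasure (P.map T) := Measure.isProbabilityMeasure_map hTmeas.aemeasurable
    have hD : MeasurableSet {pr : ℝ × ℝ | pr.1 + pr.2 = 0} := by
      have : {pr : ℝ × ℝ | pr.1 + pr.2 = 0} = (fun pr : ℝ × ℝ => pr.1 + pr.2) ⁻¹' {0} := rfl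
      rw [this]
      exact (measurable_fst.add measurable_snd) (measurableSet_singleton 0)
    have hset : {ω | ∑ l ∈ Finset.range (j' + 1), X l ω = 0}
        = (fun ω => (X 0 ω, T ω)) ⁻¹' {pr : ℝ × ℝ | pr.1 + pr.2 = 0} := by
      ext ω
      simp only [Set.mem_setOf_eq, Set.mem_preimage, hsplit ω]
    have hmap : P.map (fun ω => (X 0 ω, T ω)) = μ.prod (P.map T) := by
      rw [← hdist 0]
      exact (indepFun_iff_map_prod_eq_prod_map_map (hmeas 0).aemeasurable
        hTmeas.aemeasurable).mp hind0T
    rw [hset, ← Measure.map_apply ((hmeas 0).prodMk hTmeas) hD, hmap,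
      Measure.prod_apply_symm hD]
    have h0 : ∀ y : ℝ, μ ((fun x => (x, y)) ⁻¹' {pr : ℝ × ℝ | pr.1 + pr.2 = 0}) = 0 := by
      intro y
      have : ((fun x : ℝ => (x, y)) ⁻¹' {pr : ℝ × ℝ | pr.1 + pr.2 = 0}) = {-y} := by
        ext x
        simp only [Set.mem_preimage, Set.mem_setOf_eq, Set.mem_singleton_iff]
        constructor <;> intro h <;> linarith
      rw [this]
      exact hcont (-y)
    simp only [h0, lintegral_zero]
  -- q = p
  have hqp : ∀ m : ℕ, qq m = pp m := by
    intro m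
    have hnegm : Measurable fun v : Fin m → ℝ => fun i => -(v i) :=
      measurable_pi_lambda _ fun i => (measurable_pi_apply i).neg
    have hpre : SAnonposE m = (fun v : Fin m → ℝ => fun i => -(v i)) ⁻¹' SAnonnegE m := by
      ext v
      simp only [SAnonposE, SAnonnegE, Set.mem_setOf_eq, Set.mem_preimage, SApsum_neg,
        neg_nonneg]
    have h1 : qq m = Measure.pi (fun _ : Fin m => μ) (SAnonnegE m) := by
      show Measure.pi (fun _ : Fin m => μ) (SAnonposE m) = _
      rw [hpre, ← Measure.map_apply hnegm (SAnonnegE_meas m), SA_negInv μ hsym m]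
    have hZ : Measure.pi (fun _ : Fin m => μ)
        (⋃ (j : ℕ) (_ : 1 ≤ j) (_ : j ≤ m), {v : Fin m → ℝ | SApsum v j = 0}) = 0 := by
      refine measure_iUnion_null fun j => measure_iUnion_null fun hj1 =>
        measure_iUnion_null fun hj2 => ?_
      have hmeasZ : MeasurableSet {v : Fin m → ℝ | SApsum v j = 0} :=
        measurableSet_eq_fun SApsum_meas measurable_const
      have hid : Function.Injective (fun i : Fin m => (i : ℕ)) := fun a b h => Fin.ext h
      rw [← lawApp m (fun i => (i : ℕ)) hid _ hmeasZ]
      have he : (fun ω (i : Fin m) => X ((i : ℕ)) ω) ⁻¹' {v | SApsum v j = 0}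
          = {ω | ∑ l ∈ Finset.range j, X l ω = 0} := by
        ext ω
        simp only [Set.mem_preimage, Set.mem_setOf_eq]
        rw [SApsum_comp (fun l => X l ω) hj2]
      rw [he]
      exact hS0 j hj1
    have hsub : SAnonnegE m ⊆ SAposE m ∪
        ⋃ (j : ℕ) (_ : 1 ≤ j) (_ : j ≤ m), {v : Fin m → ℝ | SApsum v j = 0} := by
      intro v hv
      by_cases h : v ∈ SAposE m
      · exact Or.inl h
      · right
        simp only [SAposE, Set.mem_setOf_eq, not_forall] at h
        obtain ⟨j, hj1, hj2, hj3⟩ := h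
        refine Set.mem_iUnion.mpr ⟨j, Set.mem_iUnion.mpr ⟨hj1, Set.mem_iUnion.mpr ⟨hj2, ?_⟩⟩⟩
        exact le_antisymm (le_of_not_gt hj3) (hv j hj1 hj2)
    have hle1 : pp m ≤ Measure.pi (fun _ : Fin m => μ) (SAnonnegE m) :=
      measure_mono fun v hv j hj1 hj2 => le_of_lt (hv j hj1 hj2)
    have hle2 : Measure.pi (fun _ : Fin m => μ) (SAnonnegE m) ≤ pp m := by
      calc Measure.pi (fun _ : Fin m => μ) (SAnonnegE m)
          ≤ Measure.pi (fun _ : Fin m => μ) (SAposE m ∪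
              ⋃ (j : ℕ) (_ : 1 ≤ j) (_ : j ≤ m), {v : Fin m → ℝ | SApsum v j = 0}) :=
            measure_mono hsub
        _ ≤ Measure.pi (fun _ : Fin m => μ) (SAposE m) + Measure.pi (fun _ : Fin m => μ)
              (⋃ (j : ℕ) (_ : 1 ≤ j) (_ : j ≤ m), {v : Fin m → ℝ | SApsum v j = 0}) :=
            measure_union_le _ _
        _ = pp m := by rw [hZ, add_zero]
    rw [h1]
    exact le_antisymm hle2 hle1
  have hfin : ∀ m : ℕ, pp m ≠ ⊤ :=
    fun m => (lt_of_le_of_lt prob_le_one ENNReal.one_lt_top).ne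
  have hF0 : (pp 0).toReal = 1 := by
    have h : SAposE 0 = Set.univ := by
      ext v
      simp only [SAposE, Set.mem_setOf_eq, Set.mem_univ, iff_true]
      intro j h1 h2
      omega
    show (Measure.pi (fun _ : Fin 0 => μ) (SAposE 0)).toReal = 1
    rw [h, measure_univ, ENNReal.toReal_one]
  have hFconv : ∀ N, ∑ K ∈ Finset.range (N + 1), (pp K).toReal * (pp (N - K)).toReal = 1 := by
    intro N
    have h := hpart N
    simp only [hqp] at h
    have h2 := congrArg ENNReal.toReal h
    rw [ENNReal.toReal_sum (fun a _ => ENNReal.mul_ne_top (hfin a) (hfin (N - a)))] at h2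
    simpa [ENNReal.toReal_mul] using h2
  have hFval : ∀ m, (pp m).toReal = (Nat.centralBinom m : ℝ) / 4 ^ m := fun m =>
    SA_unique (fun m => (pp m).toReal) hF0 hFconv m
  rw [hPA n k hk, hqp (n - k), ENNReal.toReal_mul, hFval k, hFval (n - k),
    Nat.centralBinom_eq_two_mul_choose, Nat.centralBinom_eq_two_mul_choose]
  have e1 : 2 * (n - k) = 2 * n - 2 * k := by omega
  rw [e1, div_mul_div_comm]
  congr 1
  rw [show (4 : ℝ) = 2 ^ 2 by norm_num, ← pow_mul, ← pow_mul, ← pow_add]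
  congr 1
  omega
end
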